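/- arXiv:0712.3840 — 5 statements merged into one kernel-verified Lean document; each statement's English description precedes it below -/
import Mathlib

section
/- Let U = (u,v) be harmonic in the unit disk B, C¹ up to the boundary, with det DU > 0 on ∂B. For α ∈ [0,2π] set u_α = cos(α)·u + sin(α)·v and let M_α be the sum of the multiplicities of the critical points of u_α in B. Then M_α is finite and M_α = M_0 for every α. -/
open Complex Metric Set MeasureTheory Filter

noncomputable def pd2 (u : ℂ → ℝ) (w z : ℂ) : ℝ :=
  fderiv ℝ (fun x => fderiv ℝ u x w) z w

def HarmOn (u : ℂ → ℝ) (s : Set ℂ) : Prop :=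
  ContDiffOn ℝ 2 u s ∧ ∀ z ∈ s, pd2 u 1 z + pd2 u Complex.I z = 0

def HarmMapOn (U : ℂ → ℂ) (s : Set ℂ) : Prop :=
  HarmOn (fun z => (U z).re) s ∧ HarmOn (fun z => (U z).im) s

noncomputable def jacDet (U : ℂ → ℂ) (z : ℂ) : ℝ :=
  LinearMap.det ((fderivWithin ℝ U (closedBall (0:ℂ) 1) z) : ℂ →ₗ[ℝ] ℂ)

noncomputable def jacDetB (U : ℂ → ℂ) (z : ℂ) : ℝ :=
  LinearMap.det ((fderiv ℝ U z) : ℂ →ₗ[ℝ] ℂ)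

def IsHomeoOnto (U : ℂ → ℂ) (s t : Set ℂ) : Prop :=
  ∃ h : s ≃ₜ t, ∀ z : s, (h z : ℂ) = U (z : ℂ)

def IsDiffeoOnto (U : ℂ → ℂ) (t : Set ℂ) : Prop :=
  ContDiffOn ℝ 1 U (closedBall (0:ℂ) 1) ∧ IsHomeoOnto U (closedBall (0:ℂ) 1) t ∧
    ∀ z ∈ closedBall (0:ℂ) 1, jacDet U z ≠ 0

def WindsOnce (c : ℝ → ℂ) (w : ℂ) : Prop :=
  ∃ a : ℝ → ℝ, Continuous a ∧
    (∀ θ : ℝ, c θ - w = (‖c θ - w‖ : ℂ) * Complex.exp ((a θ : ℂ) * Complex.I)) ∧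
    a (2 * Real.pi) = a 0 + 2 * Real.pi

def TangentWinding (c : ℝ → ℂ) (n : ℤ) : Prop :=
  ∃ a : ℝ → ℝ, Continuous a ∧
    (∀ θ : ℝ, deriv c θ = (‖deriv c θ‖ : ℂ) * Complex.exp ((a θ : ℂ) * Complex.I)) ∧
    a (2 * Real.pi) = a 0 + (n : ℝ) * (2 * Real.pi)

def VanishOrder (f : ℂ → ℂ) (z : ℂ) (n : ℕ) : Prop :=
  ∃ h : ℂ → ℂ, AnalyticAt ℂ h z ∧ h z ≠ 0 ∧ ∀ᶠ w in nhds z, f w = (w - z) ^ n * h w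

noncomputable def gradC (u : ℂ → ℝ) (z : ℂ) : ℂ :=
  (fderiv ℝ u z 1 : ℂ) - (fderiv ℝ u z Complex.I : ℂ) * Complex.I

def CritSum (u : ℂ → ℝ) (M : ℕ) : Prop :=
  ∃ (S : Finset ℂ) (m : ℂ → ℕ),
    (↑S : Set ℂ) = {z | z ∈ ball (0:ℂ) 1 ∧ fderiv ℝ u z = 0} ∧
    (∀ z ∈ S, VanishOrder (gradC u) z (m z)) ∧ ∑ z ∈ S, m z = M

def LocalHomeoAt (U : ℂ → ℂ) (P : ℂ) : Prop :=
  ∃ G ∈ nhds P, Set.InjOn U (G ∩ closedBall (0:ℂ) 1)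

def IsConjOn (u v : ℂ → ℝ) (s : Set ℂ) : Prop :=
  DifferentiableOn ℝ v s ∧ ∀ z ∈ s,
    fderiv ℝ v z 1 = -(fderiv ℝ u z Complex.I) ∧ fderiv ℝ v z Complex.I = fderiv ℝ u z 1

def HilbertPV (g : ℝ → ℝ) (θ L : ℝ) : Prop :=
  Tendsto (fun ε : ℝ =>
      (1 / (2 * Real.pi)) *
        ∫ τ in Ioo (θ - Real.pi) (θ + Real.pi) \ Ioo (θ - ε) (θ + ε),
          g τ / Real.tan ((θ - τ) / 2))
    (nhdsWithin 0 (Ioi 0)) (nhds L)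

noncomputable def wderivZ (U : ℂ → ℂ) (z : ℂ) : ℂ :=
  (fderivWithin ℝ U (closedBall (0:ℂ) 1) z 1 -
    Complex.I * fderivWithin ℝ U (closedBall (0:ℂ) 1) z Complex.I) / 2

noncomputable def wderivZbar (U : ℂ → ℂ) (z : ℂ) : ℂ :=
  (fderivWithin ℝ U (closedBall (0:ℂ) 1) z 1 +
    Complex.I * fderivWithin ℝ U (closedBall (0:ℂ) 1) z Complex.I) / 2

noncomputable def angDeriv (u : ℂ → ℝ) (τ : ℝ) : ℝ :=
  fderivWithin ℝ u (closedBall (0:ℂ) 1) (Complex.exp ((τ : ℂ) * Complex.I))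
    (Complex.I * Complex.exp ((τ : ℂ) * Complex.I))

noncomputable def radDeriv (u : ℂ → ℝ) (θ : ℝ) : ℝ :=
  fderivWithin ℝ u (closedBall (0:ℂ) 1) (Complex.exp ((θ : ℂ) * Complex.I))
    (Complex.exp ((θ : ℂ) * Complex.I))


/-! ### Auxiliary lemmas -/

lemma clm_ext_complex {E : Type*} [NormedAddCommGroup E] [NormedSpace ℝ E]
    {T S : ℂ →L[ℝ] E} (h1 : T 1 = S 1) (hI : T Complex.I = S Complex.I) : T = S := by
  ext w
  have hw : (w.re : ℝ) • (1:ℂ) + (w.im : ℝ) • Complex.I = w := by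
    simp [Complex.real_smul, w.re_add_im]
  calc T w = T ((w.re : ℝ) • (1:ℂ) + (w.im : ℝ) • Complex.I) := by rw [hw]
    _ = w.re • T 1 + w.im • T Complex.I := by rw [map_add, T.map_smul, T.map_smul]
    _ = w.re • S 1 + w.im • S Complex.I := by rw [h1, hI]
    _ = S w := by rw [← S.map_smul, ← S.map_smul, ← map_add, hw]

/-- the real-linear map L ↦ (L 1 : ℂ) - (L I) * I , as a CLM -/
noncomputable def gradCLM : (ℂ →L[ℝ] ℝ) →L[ℝ] ℂ :=
  Complex.ofRealCLM.comp (ContinuousLinearMap.apply ℝ ℝ 1) -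
    Complex.I • (Complex.ofRealCLM.comp (ContinuousLinearMap.apply ℝ ℝ Complex.I))

lemma gradCLM_apply (L : ℂ →L[ℝ] ℝ) : gradCLM L = (L 1 : ℂ) - (L Complex.I : ℂ) * Complex.I := by
  simp [gradCLM, mul_comm]

lemma gradC_eq (u : ℂ → ℝ) : gradC u = fun z => gradCLM (fderiv ℝ u z) := by
  funext z; simp [gradC, gradCLM_apply]

lemma gradC_differentiableOn {u : ℂ → ℝ} (hu : HarmOn u (ball (0:ℂ) 1)) :
    DifferentiableOn ℂ (gradC u) (ball (0:ℂ) 1) := by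
  intro z hz
  have hct : ContDiffAt ℝ 2 u z := hu.1.contDiffAt (isOpen_ball.mem_nhds hz)
  have h1 : ContDiffAt ℝ 1 (fderiv ℝ u) z := hct.fderiv_right (by norm_num)
  have hdf : DifferentiableAt ℝ (fderiv ℝ u) z := h1.differentiableAt one_ne_zero
  set D := fderiv ℝ (fderiv ℝ u) z with hD
  -- pd2 in terms of D
  have hpd : ∀ w : ℂ, fderiv ℝ (fun x => fderiv ℝ u x w) z = D.flip w := by
    intro w
    have := fderiv_clm_apply (𝕜 := ℝ) hdf (differentiableAt_const w)
    simpa using this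
  have hsymm : D 1 Complex.I = D Complex.I 1 :=
    (hct.isSymmSndFDerivAt (by norm_num)).eq 1 Complex.I
  have hharm : D 1 1 + D Complex.I Complex.I = 0 := by
    have h0 := hu.2 z hz
    simp only [pd2] at h0
    rw [hpd 1, hpd Complex.I] at h0
    simpa using h0
  -- real derivative of gradC u at z
  have hgrad : HasFDerivAt (gradC u) (gradCLM.comp D) z := by
    rw [gradC_eq]
    exact gradCLM.hasFDerivAt.comp z hdf.hasFDerivAt
  -- it is complex linear
  set T := gradCLM.comp D with hT
  have hCR : T Complex.I = Complex.I * T 1 := by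
    simp only [hT, ContinuousLinearMap.comp_apply, gradCLM_apply]
    have e1 : (D Complex.I) Complex.I = - (D 1) 1 := by linarith [hharm]
    rw [e1, ← hsymm]
    set a := (D 1) 1; set b := (D 1) Complex.I
    simp [Complex.ext_iff]
  set Tc : ℂ →L[ℂ] ℂ := (ContinuousLinearMap.id ℂ ℂ).smulRight (T 1) with hTc
  have hres : Tc.restrictScalars ℝ = T := by
    apply clm_ext_complex
    · simp [hTc]
    · simp [hTc, hCR, smul_eq_mul, mul_comm]
  exact (hasFDerivAt_of_restrictScalars (𝕜 := ℝ) (f' := Tc) hgrad hres).differentiableAt.differentiableWithinAt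

lemma det_complex_lin (L : ℂ →ₗ[ℝ] ℂ) :
    LinearMap.det L = (L 1).re * (L Complex.I).im - (L 1).im * (L Complex.I).re := by
  rw [← LinearMap.det_toMatrix Complex.basisOneI, Matrix.det_fin_two]
  simp [LinearMap.toMatrix_apply, Complex.coe_basisOneI_repr, Complex.coe_basisOneI]
  ring

lemma jacDet_eq (U : ℂ → ℂ) (z : ℂ) :
    jacDet U z = (fderivWithin ℝ U (closedBall (0:ℂ) 1) z 1).re *
        (fderivWithin ℝ U (closedBall (0:ℂ) 1) z Complex.I).im -
      (fderivWithin ℝ U (closedBall (0:ℂ) 1) z 1).im *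
        (fderivWithin ℝ U (closedBall (0:ℂ) 1) z Complex.I).re := by
  rw [jacDet, det_complex_lin]
  simp

lemma exists_r₀ (U : ℂ → ℂ)
    (hU1 : ContDiffOn ℝ 1 U (closedBall (0:ℂ) 1))
    (hjac : ∀ z ∈ sphere (0:ℂ) 1, 0 < jacDet U z) :
    ∃ r₀ : ℝ, 0 < r₀ ∧ r₀ < 1 ∧
      ∀ z ∈ closedBall (0:ℂ) 1, r₀ < ‖z‖ → 0 < jacDet U z := by
  have hud : UniqueDiffOn ℝ (closedBall (0:ℂ) 1) :=
    uniqueDiffOn_convex (convex_closedBall _ _) (by simp [interior_closedBall])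
  have hfc : ContinuousOn (fderivWithin ℝ U (closedBall (0:ℂ) 1)) (closedBall (0:ℂ) 1) :=
    hU1.continuousOn_fderivWithin hud le_rfl
  have hjc : ContinuousOn (jacDet U) (closedBall (0:ℂ) 1) := by
    have h1 : ContinuousOn (fun z => fderivWithin ℝ U (closedBall (0:ℂ) 1) z 1)
        (closedBall (0:ℂ) 1) :=
      (ContinuousLinearMap.apply ℝ ℂ (1:ℂ)).continuous.comp_continuousOn hfc
    have hI : ContinuousOn (fun z => fderivWithin ℝ U (closedBall (0:ℂ) 1) z Complex.I)
        (closedBall (0:ℂ) 1) :=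
      (ContinuousLinearMap.apply ℝ ℂ (Complex.I)).continuous.comp_continuousOn hfc
    have : ContinuousOn (fun z => (fderivWithin ℝ U (closedBall (0:ℂ) 1) z 1).re *
        (fderivWithin ℝ U (closedBall (0:ℂ) 1) z Complex.I).im -
      (fderivWithin ℝ U (closedBall (0:ℂ) 1) z 1).im *
        (fderivWithin ℝ U (closedBall (0:ℂ) 1) z Complex.I).re) (closedBall (0:ℂ) 1) :=
      ((Complex.continuous_re.comp_continuousOn h1).mul
        (Complex.continuous_im.comp_continuousOn hI)).sub
       ((Complex.continuous_im.comp_continuousOn h1).mul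
        (Complex.continuous_re.comp_continuousOn hI))
    exact this.congr (fun z _ => jacDet_eq U z)
  set K : Set ℂ := closedBall (0:ℂ) 1 ∩ (jacDet U) ⁻¹' (Iic 0) with hK
  have hKclosed : IsClosed K := hjc.preimage_isClosed_of_isClosed isClosed_closedBall isClosed_Iic
  have hKcpt : IsCompact K := (isCompact_closedBall (0:ℂ) 1).of_isClosed_subset hKclosed
    inter_subset_left
  have hKnorm : ∀ z ∈ K, ‖z‖ < 1 := by
    intro z hz
    rcases lt_or_eq_of_le (mem_closedBall_zero_iff.1 hz.1) with h | h
    · exact h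
    · exact absurd (hjac z (by simpa [mem_sphere_zero_iff_norm] using h)) (by
        have := hz.2; simp only [mem_preimage, mem_Iic] at this; linarith)
  rcases K.eq_empty_or_nonempty with hKe | hKne
  · refine ⟨1/2, by norm_num, by norm_num, ?_⟩
    intro z hz hn
    by_contra h
    have : z ∈ K := ⟨hz, by simp only [mem_preimage, mem_Iic]; linarith⟩
    rw [hKe] at this; exact this
  · obtain ⟨z₀, hz₀K, hmax⟩ := hKcpt.exists_isMaxOn hKne continuous_norm.continuousOn
    refine ⟨max ‖z₀‖ (1/2), lt_max_of_lt_right (by norm_num), ?_, ?_⟩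
    · exact max_lt (hKnorm z₀ hz₀K) (by norm_num)
    · intro z hz hn
      by_contra h
      have hzK : z ∈ K := ⟨hz, by simp only [mem_preimage, mem_Iic]; linarith⟩
      have h1 : ‖z‖ ≤ ‖z₀‖ := hmax hzK
      have h2 : ‖z₀‖ ≤ max ‖z₀‖ (1/2) := le_max_left _ _
      linarith

lemma circleIntegral_add' {E : Type*} [NormedAddCommGroup E] [NormedSpace ℂ E] {f g : ℂ → E}
    {c : ℂ} {R : ℝ} (hf : CircleIntegrable f c R) (hg : CircleIntegrable g c R) :
    (∮ z in C(c, R), (f z + g z)) = (∮ z in C(c, R), f z) + ∮ z in C(c, R), g z := by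
  simp only [circleIntegral, smul_add, intervalIntegral.integral_add hf.out hg.out]

lemma argPrinciple {r : ℝ} (hr0 : 0 < r) (hr1 : r < 1) :
    ∀ (S : Finset ℂ) (f : ℂ → ℂ) (m : ℂ → ℕ),
    DifferentiableOn ℂ f (ball (0:ℂ) 1) →
    (∀ z ∈ ball (0:ℂ) 1, (f z = 0 ↔ z ∈ S)) →
    (↑S : Set ℂ) ⊆ ball (0:ℂ) r →
    (∀ z ∈ S, VanishOrder f z (m z)) →
    (∮ z in C(0, r), deriv f z / f z) = (2 * Real.pi * Complex.I) * ∑ z ∈ S, (m z : ℂ) := by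
  intro S
  induction S using Finset.induction with
  | empty =>
    intro f m hf hzero _ _
    simp only [Finset.sum_empty, mul_zero]
    have hball : ball (0:ℂ) r ⊆ ball (0:ℂ) 1 := ball_subset_ball hr1.le
    have hcb : closedBall (0:ℂ) r ⊆ ball (0:ℂ) 1 := closedBall_subset_ball hr1
    have hfa : AnalyticOnNhd ℂ f (ball (0:ℂ) 1) := hf.analyticOnNhd isOpen_ball
    have hne : ∀ z ∈ ball (0:ℂ) 1, f z ≠ 0 := by
      intro z hz h0; simpa using (hzero z hz).1 h0
    have hc : ContinuousOn (fun z => deriv f z / f z) (closedBall (0:ℂ) r) :=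
      ((hfa.deriv.continuousOn).mono hcb).div (hf.continuousOn.mono hcb)
        (fun z hz => hne z (hcb hz))
    have hd : ∀ z ∈ ball (0:ℂ) r \ (∅ : Set ℂ), DifferentiableAt ℂ (fun z => deriv f z / f z) z := by
      intro z hz
      have hz1 : z ∈ ball (0:ℂ) 1 := hball hz.1
      exact ((hfa.deriv z hz1).differentiableAt).div ((hfa z hz1).differentiableAt) (hne z hz1)
    exact Complex.circleIntegral_eq_zero_of_differentiable_on_off_countable hr0.le
      countable_empty hc (by simpa using hd)
  | @insert a S ha IH =>
    intro f m hf hzero hSr hord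
    have haball : a ∈ ball (0:ℂ) r := hSr (by simp)
    have ha1 : a ∈ ball (0:ℂ) 1 := ball_subset_ball hr1.le haball
    obtain ⟨h, hha, hh0, hfeq⟩ := hord a (Finset.mem_insert_self a S)
    set n := m a with hn
    have hfa0 : f a = 0 := (hzero a ha1).2 (Finset.mem_insert_self a S)
    have hn1 : 1 ≤ n := by
      rcases Nat.eq_zero_or_pos n with h0 | h1
      · exfalso; have := hfeq.self_of_nhds; rw [hfa0, h0] at this; simp at this
        exact hh0 this.symm
      · exact h1
    set f₁ : ℂ → ℂ := fun w => if w = a then h a else f w / (w - a) ^ n with hf₁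
    -- f = (w-a)^n * f₁ globally
    have hkey : ∀ w : ℂ, f w = (w - a) ^ n * f₁ w := by
      intro w
      by_cases hw : w = a
      · subst hw; simp [hfa0, zero_pow (by omega : n ≠ 0)]
      · have hwa : (w - a) ^ n ≠ 0 := pow_ne_zero _ (sub_ne_zero.2 hw)
        simp only [hf₁, if_neg hw]
        field_simp
    -- f₁ = h near a
    have hfh : f₁ =ᶠ[nhds a] h := by
      filter_upwards [hfeq] with w hw
      by_cases hwa : w = a
      · subst hwa; simp [hf₁]
      · have hne : (w - a) ^ n ≠ 0 := pow_ne_zero _ (sub_ne_zero.2 hwa)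
        simp only [hf₁, if_neg hwa, hw]
        field_simp
    have hf₁d : DifferentiableOn ℂ f₁ (ball (0:ℂ) 1) := by
      intro w hw
      by_cases hwa : w = a
      · subst hwa
        exact (hha.differentiableAt.congr_of_eventuallyEq hfh).differentiableWithinAt
      · have hopen : IsOpen (ball (0:ℂ) 1 \ {a}) := isOpen_ball.sdiff isClosed_singleton
        have hmem : w ∈ ball (0:ℂ) 1 \ {a} := ⟨hw, by simpa using hwa⟩
        have : DifferentiableAt ℂ (fun x => f x / (x - a) ^ n) w := by
          have hfd : DifferentiableAt ℂ f w := (hf.analyticOnNhd isOpen_ball w hw).differentiableAt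
          exact hfd.div (by fun_prop) (pow_ne_zero _ (sub_ne_zero.2 hwa))
        refine (this.congr_of_eventuallyEq ?_).differentiableWithinAt
        filter_upwards [hopen.mem_nhds hmem] with x hx
        simp [hf₁, if_neg (by simpa using hx.2)]
    -- zero set of f₁
    have hzero₁ : ∀ z ∈ ball (0:ℂ) 1, (f₁ z = 0 ↔ z ∈ S) := by
      intro z hz
      by_cases hza : z = a
      · subst hza
        simp only [hf₁, if_pos rfl]
        exact ⟨fun h0 => absurd h0 hh0, fun hmem => absurd hmem ha⟩
      · have hne : (z - a) ^ n ≠ 0 := pow_ne_zero _ (sub_ne_zero.2 hza)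
        simp only [hf₁, if_neg hza, div_eq_zero_iff, hne, or_false]
        rw [hzero z hz, Finset.mem_insert]
        exact ⟨fun h' => h'.resolve_left hza, fun h' => Or.inr h'⟩
    -- orders of f₁
    have hord₁ : ∀ z ∈ S, VanishOrder f₁ z (m z) := by
      intro z hzS
      have hza : z ≠ a := fun h' => ha (h' ▸ hzS)
      obtain ⟨g, hg, hg0, hge⟩ := hord z (Finset.mem_insert_of_mem hzS)
      have hpa : AnalyticAt ℂ (fun w : ℂ => (w - a) ^ n) z :=
        ((analyticAt_id.sub analyticAt_const).pow n)
      refine ⟨fun w => g w / (w - a) ^ n, ?_, ?_, ?_⟩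
      · exact hg.div hpa (pow_ne_zero _ (sub_ne_zero.2 hza))
      · exact div_ne_zero hg0 (pow_ne_zero _ (sub_ne_zero.2 hza))
      · have hne : ∀ᶠ w in nhds z, w ≠ a := by
          exact (isOpen_ne.eventually_mem (x := z) hza : _)
        filter_upwards [hge, hne] with w hw hwa
        have hpow : (w - a) ^ n ≠ 0 := pow_ne_zero _ (sub_ne_zero.2 hwa)
        simp only [hf₁, if_neg hwa, hw]
        field_simp
        try ring
    have hS'r : (↑S : Set ℂ) ⊆ ball (0:ℂ) r := fun z hz => hSr (by simp [hz])
    -- the logarithmic derivative identity on the sphere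
    have hsph : ∀ w ∈ sphere (0:ℂ) r, deriv f w / f w = (n : ℂ) / (w - a) + deriv f₁ w / f₁ w := by
      intro w hw
      have hw1 : w ∈ ball (0:ℂ) 1 := by
        rw [mem_sphere_zero_iff_norm] at hw
        rw [mem_ball_zero_iff]; rw [hw]; exact hr1
      have hwa : w ≠ a := by
        intro h'; subst h'
        rw [mem_ball_zero_iff] at haball
        rw [mem_sphere_zero_iff_norm] at hw
        exact absurd hw (by linarith)
      have hf₁w : f₁ w ≠ 0 := by
        intro h0
        have := (hzero₁ w hw1).1 h0
        have := hS'r this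
        rw [mem_ball_zero_iff] at this
        rw [mem_sphere_zero_iff_norm] at hw
        linarith
      have hwsub : w - a ≠ 0 := sub_ne_zero.2 hwa
      have hd₁ : HasDerivAt f₁ (deriv f₁ w) w :=
        ((hf₁d.analyticOnNhd isOpen_ball w hw1).differentiableAt).hasDerivAt
      have hdp : HasDerivAt (fun x : ℂ => (x - a) ^ n) ((n : ℂ) * (w - a) ^ (n - 1)) w := by
        have := ((hasDerivAt_id w).sub_const a).fun_pow n
        simpa using this
      have hdf : HasDerivAt f ((n : ℂ) * (w - a) ^ (n - 1) * f₁ w + (w - a) ^ n * deriv f₁ w) w := by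
        have := hdp.mul hd₁
        exact this.congr_of_eventuallyEq (Filter.Eventually.of_forall fun x => (hkey x))
      rw [hdf.deriv, hkey w]
      have hpow : (w - a) ^ n ≠ 0 := pow_ne_zero _ hwsub
      have hpow1 : (w - a) ^ (n - 1) * (w - a) = (w - a) ^ n := by
        rw [← pow_succ]; congr 1; omega
      field_simp
      ring_nf
      rw [← hpow1]
      ring
    -- integrability
    have hcb : closedBall (0:ℂ) r ⊆ ball (0:ℂ) 1 := closedBall_subset_ball hr1
    have hsphsub : sphere (0:ℂ) r ⊆ ball (0:ℂ) 1 := sphere_subset_closedBall.trans hcb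
    have hint1 : CircleIntegrable (fun w => (n : ℂ) / (w - a)) 0 r := by
      apply ContinuousOn.circleIntegrable hr0.le
      refine continuousOn_const.div ((continuous_id.sub continuous_const).continuousOn) ?_
      intro x hx
      have hxa : ‖a‖ < r := mem_ball_zero_iff.1 haball
      have hxn : ‖x‖ = r := mem_sphere_zero_iff_norm.1 hx
      have hne : x ≠ a := fun h' => by rw [h'] at hxn; linarith
      simpa [sub_ne_zero] using hne
    have hf₁a : AnalyticOnNhd ℂ f₁ (ball (0:ℂ) 1) := hf₁d.analyticOnNhd isOpen_ball
    have hf₁ne : ∀ w ∈ sphere (0:ℂ) r, f₁ w ≠ 0 := by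
      intro w hw h0
      have hw1 : w ∈ ball (0:ℂ) 1 := hsphsub hw
      have := hS'r ((hzero₁ w hw1).1 h0)
      rw [mem_ball_zero_iff] at this; rw [mem_sphere_zero_iff_norm] at hw; linarith
    have hint2 : CircleIntegrable (fun w => deriv f₁ w / f₁ w) 0 r := by
      apply ContinuousOn.circleIntegrable hr0.le
      exact ((hf₁a.deriv.continuousOn).mono hsphsub).div
        ((hf₁d.continuousOn).mono hsphsub) hf₁ne
    calc (∮ z in C(0, r), deriv f z / f z)
        = ∮ z in C(0, r), ((n : ℂ) / (z - a) + deriv f₁ z / f₁ z) :=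
          circleIntegral.integral_congr hr0.le (fun w hw => hsph w hw)
      _ = (∮ z in C(0, r), (n : ℂ) / (z - a)) + ∮ z in C(0, r), deriv f₁ z / f₁ z :=
          circleIntegral_add' hint1 hint2
      _ = (2 * Real.pi * Complex.I) * (n : ℂ) +
            (2 * Real.pi * Complex.I) * ∑ z ∈ S, (m z : ℂ) := by
          rw [IH f₁ m hf₁d hzero₁ hS'r hord₁]
          congr 1
          have hsm := circleIntegral.integral_smul (n : ℂ) (fun z : ℂ => (z - a)⁻¹) 0 r
          have : (∮ z in C(0, r), (n:ℂ) / (z - a)) = (n:ℂ) • ∮ z in C(0, r), (z - a)⁻¹ := by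
            rw [← hsm]
            apply circleIntegral.integral_congr hr0.le
            intro z hz
            simp [div_eq_mul_inv, smul_eq_mul]
          rw [this, circleIntegral.integral_sub_inv_of_mem_ball haball]
          simp [smul_eq_mul]; ring
      _ = (2 * Real.pi * Complex.I) * ∑ z ∈ insert a S, (m z : ℂ) := by
          rw [Finset.sum_insert ha]; ring

open Classical in
noncomputable def mOrd (f : ℂ → ℂ) (z : ℂ) : ℕ :=
  if h : AnalyticAt ℂ f z then (analyticOrderAt f z).toNat else 0

lemma mOrd_spec {f : ℂ → ℂ} {z : ℂ} (hf : AnalyticAt ℂ f z)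
    (hne : ¬ (∀ᶠ w in nhds z, f w = 0)) : VanishOrder f z (mOrd f z) := by
  have hord : analyticOrderAt f z ≠ ⊤ := by
    rw [ne_eq, analyticOrderAt_eq_top]; exact hne
  have h2 : analyticOrderAt f z = ((analyticOrderAt f z).toNat : ℕ∞) := (ENat.coe_toNat hord).symm
  rw [hf.analyticOrderAt_eq_natCast] at h2
  obtain ⟨g, hg, hg0, hfe⟩ := h2
  refine ⟨g, hg, hg0, ?_⟩
  have hm : mOrd f z = (analyticOrderAt f z).toNat := by rw [mOrd, dif_pos hf]
  rw [hm]
  filter_upwards [hfe] with w hw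
  simpa [smul_eq_mul] using hw

lemma zeros_finset {g : ℂ → ℂ} {r₀ : ℝ} (hr₀0 : 0 < r₀) (hr₀1 : r₀ < 1)
    (hg : DifferentiableOn ℂ g (ball (0:ℂ) 1))
    (hne : ∀ z ∈ ball (0:ℂ) 1, r₀ < ‖z‖ → g z ≠ 0) :
    ∃ S : Finset ℂ, (↑S : Set ℂ) = {z | z ∈ ball (0:ℂ) 1 ∧ g z = 0} ∧
      (∀ z ∈ ball (0:ℂ) 1, (g z = 0 ↔ z ∈ S)) ∧
      (↑S : Set ℂ) ⊆ closedBall (0:ℂ) r₀ ∧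
      ∀ z ∈ S, VanishOrder g z (mOrd g z) := by
  have hga : AnalyticOnNhd ℂ g (ball (0:ℂ) 1) := hg.analyticOnNhd isOpen_ball
  set Z : Set ℂ := {z | z ∈ ball (0:ℂ) 1 ∧ g z = 0} with hZ
  have hZball : Z ⊆ closedBall (0:ℂ) r₀ := by
    intro z hz
    rw [mem_closedBall_zero_iff]
    by_contra h
    exact hne z hz.1 (by linarith [not_le.1 h]) hz.2
  have hnotev : ∀ z ∈ ball (0:ℂ) 1, ¬ (∀ᶠ w in nhds z, g w = 0) := by
    intro z hz hev
    have heq := AnalyticOnNhd.eqOn_zero_of_preconnected_of_eventuallyEq_zero hga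
      (convex_ball (0:ℂ) 1).isPreconnected hz hev
    set w : ℂ := (((r₀ + 1) / 2 : ℝ) : ℂ) with hw
    have hwn : ‖w‖ = (r₀ + 1) / 2 := by
      rw [hw, Complex.norm_real, Real.norm_eq_abs, abs_of_pos (by linarith)]
    have hwb : w ∈ ball (0:ℂ) 1 := by rw [mem_ball_zero_iff, hwn]; linarith
    exact hne w hwb (by rw [hwn]; linarith) (heq hwb)
  have hiso : ∀ z ∈ Z, ∃ V : Set ℂ, IsOpen V ∧ z ∈ V ∧ Z ∩ V ⊆ {z} := by
    intro z hz
    obtain ⟨h, hha, hh0, hfe⟩ := mOrd_spec (hga z hz.1) (hnotev z hz.1)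
    have hhne : ∀ᶠ w in nhds z, h w ≠ 0 := hha.continuousAt.eventually_ne hh0
    obtain ⟨V, hV1, hVopen, hVz⟩ := _root_.eventually_nhds_iff.1 (hfe.and hhne)
    refine ⟨V, hVopen, hVz, ?_⟩
    rintro w ⟨hwZ, hwV⟩
    obtain ⟨hw1, hw2⟩ := hV1 w hwV
    have hp : (w - z) ^ (mOrd g z) = 0 := by
      by_contra h'
      exact (mul_ne_zero h' hw2) (hw1 ▸ hwZ.2)
    have := pow_eq_zero_iff'.mp hp
    simpa [sub_eq_zero] using this.1
  -- Z is compact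
  have hcb1 : closedBall (0:ℂ) ((r₀+1)/2) ⊆ ball (0:ℂ) 1 :=
    closedBall_subset_ball (by linarith)
  have hZeq : Z = closedBall (0:ℂ) ((r₀+1)/2) ∩ g ⁻¹' {0} := by
    ext z
    constructor
    · intro hz
      exact ⟨closedBall_subset_closedBall (by linarith) (hZball hz), hz.2⟩
    · rintro ⟨h1, h2⟩
      exact ⟨hcb1 h1, h2⟩
  have hZclosed : IsClosed Z := by
    rw [hZeq]
    exact (hg.continuousOn.mono hcb1).preimage_isClosed_of_isClosed
      isClosed_closedBall isClosed_singleton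
  have hZcpt : IsCompact Z :=
    (isCompact_closedBall (0:ℂ) r₀).of_isClosed_subset hZclosed hZball
  -- Z is finite
  have hiso' : ∀ z : ℂ, ∃ V : Set ℂ, IsOpen V ∧ (z ∈ Z → z ∈ V ∧ Z ∩ V ⊆ {z}) := by
    intro z
    by_cases hz : z ∈ Z
    · obtain ⟨V, h1, h2, h3⟩ := hiso z hz
      exact ⟨V, h1, fun _ => ⟨h2, h3⟩⟩
    · exact ⟨∅, isOpen_empty, fun h => absurd h hz⟩
  choose V hVo hVP using hiso'
  have hcover : Z ⊆ ⋃ z ∈ Z, V z := fun z hz => mem_biUnion hz (hVP z hz).1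
  obtain ⟨b', hb'Z, hb'fin, hb'cov⟩ :=
    hZcpt.elim_finite_subcover_image (fun z _ => hVo z) hcover
  have hZb' : Z ⊆ b' := by
    intro w hw
    obtain ⟨z, hz, hwV⟩ := mem_iUnion₂.1 (hb'cov hw)
    have : w ∈ ({z} : Set ℂ) := (hVP z (hb'Z hz)).2 ⟨hw, hwV⟩
    rw [mem_singleton_iff] at this
    exact this ▸ hz
  have hZfin : Z.Finite := hb'fin.subset hZb'
  refine ⟨hZfin.toFinset, by simp [hZ], ?_, ?_, ?_⟩
  · intro z hz
    rw [Set.Finite.mem_toFinset]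
    exact ⟨fun h0 => ⟨hz, h0⟩, fun h' => h'.2⟩
  · rw [Set.Finite.coe_toFinset]; exact hZball
  · intro z hzS
    rw [Set.Finite.mem_toFinset] at hzS
    exact mOrd_spec (hga z hzS.1) (hnotev z hzS.1)

section main
variable (U : ℂ → ℂ)

noncomputable def Afun (z : ℂ) : ℂ :=
  (gradC (fun w => (U w).re) z + Complex.I * gradC (fun w => (U w).im) z) / 2

noncomputable def Bfun (z : ℂ) : ℂ :=
  (gradC (fun w => (U w).re) z - Complex.I * gradC (fun w => (U w).im) z) / 2

variable {U}

lemma diffAt_of_mem_ball (hU1 : ContDiffOn ℝ 1 U (closedBall (0:ℂ) 1)) {z : ℂ}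
    (hz : z ∈ ball (0:ℂ) 1) : DifferentiableAt ℝ U z := by
  have hnb : closedBall (0:ℂ) 1 ∈ nhds z :=
    mem_nhds_iff.2 ⟨ball (0:ℂ) 1, ball_subset_closedBall, isOpen_ball, hz⟩
  exact ((hU1.differentiableOn one_ne_zero) z (ball_subset_closedBall hz)).differentiableAt hnb

lemma gradC_re_eq (hU1 : ContDiffOn ℝ 1 U (closedBall (0:ℂ) 1)) {z : ℂ}
    (hz : z ∈ ball (0:ℂ) 1) :
    gradC (fun w => (U w).re) z =
      ((fderiv ℝ U z 1).re : ℂ) - ((fderiv ℝ U z Complex.I).re : ℂ) * Complex.I := by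
  have hUz := diffAt_of_mem_ball hU1 hz
  have hre : fderiv ℝ (fun w => (U w).re) z = Complex.reCLM.comp (fderiv ℝ U z) :=
    (Complex.reCLM.hasFDerivAt.comp z hUz.hasFDerivAt).fderiv
  simp [gradC, hre]

lemma gradC_im_eq (hU1 : ContDiffOn ℝ 1 U (closedBall (0:ℂ) 1)) {z : ℂ}
    (hz : z ∈ ball (0:ℂ) 1) :
    gradC (fun w => (U w).im) z =
      ((fderiv ℝ U z 1).im : ℂ) - ((fderiv ℝ U z Complex.I).im : ℂ) * Complex.I := by
  have hUz := diffAt_of_mem_ball hU1 hz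
  have him : fderiv ℝ (fun w => (U w).im) z = Complex.imCLM.comp (fderiv ℝ U z) :=
    (Complex.imCLM.hasFDerivAt.comp z hUz.hasFDerivAt).fderiv
  simp [gradC, him]

lemma Afun_eq (hU1 : ContDiffOn ℝ 1 U (closedBall (0:ℂ) 1)) {z : ℂ}
    (hz : z ∈ ball (0:ℂ) 1) :
    Afun U z = (fderiv ℝ U z 1 - Complex.I * fderiv ℝ U z Complex.I) / 2 := by
  rw [Afun, gradC_re_eq hU1 hz, gradC_im_eq hU1 hz]
  set p := fderiv ℝ U z 1; set q := fderiv ℝ U z Complex.I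
  have hp : p = (p.re : ℂ) + (p.im : ℂ) * Complex.I := (Complex.re_add_im p).symm
  have hq : q = (q.re : ℂ) + (q.im : ℂ) * Complex.I := (Complex.re_add_im q).symm
  rw [hp, hq]
  apply Complex.ext <;> simp <;> ring

lemma Bfun_eq (hU1 : ContDiffOn ℝ 1 U (closedBall (0:ℂ) 1)) {z : ℂ}
    (hz : z ∈ ball (0:ℂ) 1) :
    Bfun U z = (starRingEnd ℂ) ((fderiv ℝ U z 1 + Complex.I * fderiv ℝ U z Complex.I) / 2) := by
  rw [Bfun, gradC_re_eq hU1 hz, gradC_im_eq hU1 hz]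
  set p := fderiv ℝ U z 1; set q := fderiv ℝ U z Complex.I
  have hp : p = (p.re : ℂ) + (p.im : ℂ) * Complex.I := (Complex.re_add_im p).symm
  have hq : q = (q.re : ℂ) + (q.im : ℂ) * Complex.I := (Complex.re_add_im q).symm
  rw [hp, hq]
  simp only [map_div₀, map_add, map_mul, Complex.conj_I, map_ofNat]
  apply Complex.ext <;> simp <;> ring

lemma jac_interior (hU1 : ContDiffOn ℝ 1 U (closedBall (0:ℂ) 1)) {z : ℂ}
    (hz : z ∈ ball (0:ℂ) 1) :
    jacDet U z = ‖Afun U z‖ ^ 2 - ‖Bfun U z‖ ^ 2 := by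
  have hnb : closedBall (0:ℂ) 1 ∈ nhds z :=
    mem_nhds_iff.2 ⟨ball (0:ℂ) 1, ball_subset_closedBall, isOpen_ball, hz⟩
  have hfw : fderivWithin ℝ U (closedBall (0:ℂ) 1) z = fderiv ℝ U z :=
    fderivWithin_of_mem_nhds hnb
  rw [jacDet, det_complex_lin]
  simp only [ContinuousLinearMap.coe_coe, hfw]
  rw [Afun_eq hU1 hz, Bfun_eq hU1 hz, Complex.norm_conj]
  set p := fderiv ℝ U z 1; set q := fderiv ℝ U z Complex.I
  rw [Complex.sq_norm, Complex.sq_norm]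
  simp [Complex.normSq_apply, Complex.div_re, Complex.div_im, Complex.normSq_apply]
  ring

/-- The key algebraic expression of the gradient of `u_α`. -/
lemma gradC_alpha (hU1 : ContDiffOn ℝ 1 U (closedBall (0:ℂ) 1)) (α : ℝ) {z : ℂ}
    (hz : z ∈ ball (0:ℂ) 1) :
    gradC (fun w => Real.cos α * (U w).re + Real.sin α * (U w).im) z =
      Complex.exp (-(α:ℂ) * Complex.I) *
        (Afun U z + Complex.exp (2*(α:ℂ) * Complex.I) * Bfun U z) := by
  have hUz := diffAt_of_mem_ball hU1 hz
  have hu : HasFDerivAt (fun w => (U w).re) (Complex.reCLM.comp (fderiv ℝ U z)) z :=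
    Complex.reCLM.hasFDerivAt.comp z hUz.hasFDerivAt
  have hv : HasFDerivAt (fun w => (U w).im) (Complex.imCLM.comp (fderiv ℝ U z)) z :=
    Complex.imCLM.hasFDerivAt.comp z hUz.hasFDerivAt
  have hsum : HasFDerivAt (fun w => Real.cos α * (U w).re + Real.sin α * (U w).im)
      (Real.cos α • (Complex.reCLM.comp (fderiv ℝ U z)) +
        Real.sin α • (Complex.imCLM.comp (fderiv ℝ U z))) z :=
    (hu.const_mul (Real.cos α)).add (hv.const_mul (Real.sin α))
  have hfd := hsum.fderiv
  have hX : gradC (fun w => Real.cos α * (U w).re + Real.sin α * (U w).im) z =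
      (Real.cos α : ℂ) * gradC (fun w => (U w).re) z +
      (Real.sin α : ℂ) * gradC (fun w => (U w).im) z := by
    simp only [gradC, hfd, hu.fderiv, hv.fderiv]
    simp [ContinuousLinearMap.add_apply, ContinuousLinearMap.smul_apply]
    push_cast
    ring
  rw [hX]
  -- now pure algebra
  set X := gradC (fun w => (U w).re) z
  set Y := gradC (fun w => (U w).im) z
  have hA : Afun U z = (X + Complex.I * Y) / 2 := rfl
  have hB : Bfun U z = (X - Complex.I * Y) / 2 := rfl
  rw [hA, hB, mul_add, ← mul_assoc, ← Complex.exp_add]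
  have h2 : -(α:ℂ) * Complex.I + 2*(α:ℂ) * Complex.I = (α:ℂ) * Complex.I := by ring
  rw [h2, Complex.exp_mul_I, Complex.exp_mul_I]
  rw [Complex.cos_neg, Complex.sin_neg, ← Complex.ofReal_cos, ← Complex.ofReal_sin]
  linear_combination ((Real.sin α : ℂ) * Y) * Complex.I_sq

end main

lemma const_of_nat_valued {f : ℝ → ℝ} (hf : Continuous f) (hn : ∀ t : ℝ, ∃ n : ℕ, f t = n)
    (a b : ℝ) : f a = f b := by
  by_contra hne
  obtain ⟨na, hna⟩ := hn a
  obtain ⟨nb, hnb⟩ := hn b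
  have key : ∀ p : ℕ, ((p:ℝ) + 1/2) ∈ uIcc (f a) (f b) → False := by
    intro p hp
    obtain ⟨t, _, ht⟩ := intermediate_value_uIcc (hf.continuousOn (s := uIcc a b)) hp
    obtain ⟨n, hnt⟩ := hn t
    rw [hnt] at ht
    have h2 : ((2*n : ℕ) : ℝ) = ((2*p + 1 : ℕ) : ℝ) := by push_cast; linarith
    have := Nat.cast_injective (R := ℝ) h2
    omega
  have hnn : na ≠ nb := by
    intro h; rw [h, ← hnb] at hna; exact hne (hna)
  rcases Nat.lt_or_ge na nb with h | h
  · refine key na ?_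
    rw [mem_uIcc]; left
    have : (na:ℝ) + 1 ≤ nb := by exact_mod_cast h
    constructor
    · rw [hna]; linarith
    · rw [hnb]; linarith
  · have h' : nb < na := by omega
    refine key nb ?_
    rw [mem_uIcc]; right
    have : (nb:ℝ) + 1 ≤ na := by exact_mod_cast h'
    constructor
    · rw [hnb]; linarith
    · rw [hna]; linarith

lemma Phi_continuous {A B : ℂ → ℂ} {r : ℝ} (hr0 : 0 < r) (hr1 : r < 1)
    (hA : DifferentiableOn ℂ A (ball (0:ℂ) 1)) (hB : DifferentiableOn ℂ B (ball (0:ℂ) 1))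
    (hAB : ∀ z ∈ sphere (0:ℂ) r, ∀ c : ℂ, ‖c‖ = 1 → A z + c * B z ≠ 0) :
    Continuous (fun t : ℝ => ∮ z in C(0, r),
      (deriv A z + Complex.exp ((t:ℂ)*Complex.I) * deriv B z) /
        (A z + Complex.exp ((t:ℂ)*Complex.I) * B z)) := by
  have hsub : sphere (0:ℂ) r ⊆ ball (0:ℂ) 1 :=
    (sphere_subset_closedBall).trans (closedBall_subset_ball hr1)
  have hmem : ∀ θ : ℝ, circleMap 0 r θ ∈ ball (0:ℂ) 1 :=
    fun θ => hsub (circleMap_mem_sphere 0 hr0.le θ)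
  have hAc : Continuous fun θ : ℝ => A (circleMap 0 r θ) :=
    hA.continuousOn.comp_continuous (continuous_circleMap 0 r) hmem
  have hBc : Continuous fun θ : ℝ => B (circleMap 0 r θ) :=
    hB.continuousOn.comp_continuous (continuous_circleMap 0 r) hmem
  have hA'c : Continuous fun θ : ℝ => deriv A (circleMap 0 r θ) :=
    ((hA.analyticOnNhd isOpen_ball).deriv.continuousOn).comp_continuous
      (continuous_circleMap 0 r) hmem
  have hB'c : Continuous fun θ : ℝ => deriv B (circleMap 0 r θ) :=
    ((hB.analyticOnNhd isOpen_ball).deriv.continuousOn).comp_continuous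
      (continuous_circleMap 0 r) hmem
  set f : ℝ → ℝ → ℂ := fun t θ => (circleMap 0 r θ * Complex.I) •
      ((deriv A (circleMap 0 r θ) + Complex.exp ((t:ℂ)*Complex.I) * deriv B (circleMap 0 r θ)) /
        (A (circleMap 0 r θ) + Complex.exp ((t:ℂ)*Complex.I) * B (circleMap 0 r θ))) with hf
  have hexpc : Continuous fun p : ℝ × ℝ => Complex.exp ((p.1:ℂ)*Complex.I) :=
    Complex.continuous_exp.comp ((Complex.continuous_ofReal.comp continuous_fst).mul
      continuous_const)
  have hfc : Continuous (Function.uncurry f) := by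
    apply Continuous.fun_smul
    · exact ((continuous_circleMap 0 r).comp continuous_snd).mul continuous_const
    · apply Continuous.div
      · exact (hA'c.comp continuous_snd).add (hexpc.mul (hB'c.comp continuous_snd))
      · exact (hAc.comp continuous_snd).add (hexpc.mul (hBc.comp continuous_snd))
      · rintro ⟨t, θ⟩
        exact hAB _ (circleMap_mem_sphere 0 hr0.le θ) _ (by simp [Complex.norm_exp])
  have := intervalIntegral.continuous_parametric_intervalIntegral_of_continuous' (μ := volume) hfc 0 (2*Real.pi)
  convert this using 2 with t
  simp only [circleIntegral, deriv_circleMap, hf]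


/-- The number of critical points of `u_α`, counted with multiplicity, is finite and
independent of `α`. -/
theorem critSum_finite_and_independent (U : ℂ → ℂ)
    (hU1 : ContDiffOn ℝ 1 U (closedBall (0:ℂ) 1))
    (hharm : HarmMapOn U (ball (0:ℂ) 1))
    (hjac : ∀ z ∈ sphere (0:ℂ) 1, 0 < jacDet U z) :
    ∃ M : ℕ, ∀ α ∈ Icc (0:ℝ) (2 * Real.pi),
      CritSum (fun z => Real.cos α * (U z).re + Real.sin α * (U z).im) M := by
  obtain ⟨r₀, hr₀0, hr₀1, hjr⟩ := exists_r₀ U hU1 hjac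
  set A : ℂ → ℂ := Afun U with hAdef
  set B : ℂ → ℂ := Bfun U with hBdef
  have hgu := gradC_differentiableOn hharm.1
  have hgv := gradC_differentiableOn hharm.2
  have hA : DifferentiableOn ℂ A (ball (0:ℂ) 1) :=
    (hgu.add ((differentiableOn_const Complex.I).mul hgv)).div_const 2
  have hB : DifferentiableOn ℂ B (ball (0:ℂ) 1) :=
    (hgu.sub ((differentiableOn_const Complex.I).mul hgv)).div_const 2
  have hABlt : ∀ z ∈ ball (0:ℂ) 1, r₀ < ‖z‖ → ‖B z‖ < ‖A z‖ := by
    intro z hz hn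
    have hj : 0 < jacDet U z := hjr z (ball_subset_closedBall hz) hn
    rw [jac_interior hU1 hz] at hj
    exact lt_of_pow_lt_pow_left₀ 2 (norm_nonneg _) (by linarith)
  set r : ℝ := (r₀ + 1)/2 with hrdef
  have hr0 : 0 < r := by rw [hrdef]; linarith
  have hr1 : r < 1 := by rw [hrdef]; linarith
  have hrr₀ : r₀ < r := by rw [hrdef]; linarith
  -- nonvanishing of A + c B near the boundary
  have hgcne : ∀ c : ℂ, ‖c‖ = 1 → ∀ z ∈ ball (0:ℂ) 1, r₀ < ‖z‖ →
      A z + c * B z ≠ 0 := by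
    intro c hc z hz hn h0
    have h1 : A z = - (c * B z) := by linear_combination h0
    have h2 : ‖A z‖ = ‖B z‖ := by
      rw [h1, norm_neg, norm_mul, hc, one_mul]
    exact absurd h2 (ne_of_gt (hABlt z hz hn))
  set g : ℝ → ℂ → ℂ := fun t z => A z + Complex.exp ((t:ℂ)*Complex.I) * B z with hgdef
  have habs : ∀ t : ℝ, ‖Complex.exp ((t:ℂ)*Complex.I)‖ = 1 := by
    intro t; simp [Complex.norm_exp]
  have hgne : ∀ t : ℝ, ∀ z ∈ ball (0:ℂ) 1, r₀ < ‖z‖ → g t z ≠ 0 :=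
    fun t z hz hn => hgcne _ (habs t) z hz hn
  have hgdiff : ∀ t : ℝ, DifferentiableOn ℂ (g t) (ball (0:ℂ) 1) :=
    fun t => hA.add ((differentiableOn_const _).mul hB)
  have hzf : ∀ t : ℝ, ∃ S : Finset ℂ, (↑S : Set ℂ) = {z | z ∈ ball (0:ℂ) 1 ∧ g t z = 0} ∧
      (∀ z ∈ ball (0:ℂ) 1, (g t z = 0 ↔ z ∈ S)) ∧ (↑S : Set ℂ) ⊆ closedBall (0:ℂ) r₀ ∧
      ∀ z ∈ S, VanishOrder (g t) z (mOrd (g t) z) :=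
    fun t => zeros_finset hr₀0 hr₀1 (hgdiff t) (hgne t)
  choose S hS1 hS2 hS3 hS4 using hzf
  set N : ℝ → ℕ := fun t => ∑ z ∈ S t, mOrd (g t) z with hNdef
  set Φ : ℝ → ℂ := fun t => ∮ z in C(0, r),
      (deriv A z + Complex.exp ((t:ℂ)*Complex.I) * deriv B z) /
        (A z + Complex.exp ((t:ℂ)*Complex.I) * B z) with hΦdef
  have hsubball : sphere (0:ℂ) r ⊆ ball (0:ℂ) 1 :=
    sphere_subset_closedBall.trans (closedBall_subset_ball hr1)
  have hΦN : ∀ t : ℝ, Φ t = (2 * Real.pi * Complex.I) * (N t : ℂ) := by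
    intro t
    have hap := argPrinciple hr0 hr1 (S t) (g t) (mOrd (g t)) (hgdiff t) (hS2 t)
      ((hS3 t).trans (closedBall_subset_ball hrr₀)) (hS4 t)
    have hcongr : ∀ w ∈ sphere (0:ℂ) r, deriv (g t) w / g t w =
        (deriv A w + Complex.exp ((t:ℂ)*Complex.I) * deriv B w) /
          (A w + Complex.exp ((t:ℂ)*Complex.I) * B w) := by
      intro w hw
      have hw1 : w ∈ ball (0:ℂ) 1 := hsubball hw
      have hdA : HasDerivAt A (deriv A w) w :=
        ((hA.analyticOnNhd isOpen_ball) w hw1).differentiableAt.hasDerivAt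
      have hdB : HasDerivAt B (deriv B w) w :=
        ((hB.analyticOnNhd isOpen_ball) w hw1).differentiableAt.hasDerivAt
      have hder : HasDerivAt (g t)
          (deriv A w + Complex.exp ((t:ℂ)*Complex.I) * deriv B w) w :=
        hdA.add (hdB.const_mul _)
      rw [hder.deriv]
    have := circleIntegral.integral_congr (f := fun w => deriv (g t) w / g t w) hr0.le hcongr
    rw [hΦdef]
    simp only
    rw [← this, hap, hNdef]
    push_cast
    ring
  have hΦcont : Continuous Φ := by
    apply Phi_continuous hr0 hr1 hA hB
    intro z hz c hc
    exact hgcne c hc z (hsubball hz)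
      (by rw [mem_sphere_zero_iff_norm] at hz; rw [hz]; exact hrr₀)
  have h2piI : (2 * (Real.pi:ℂ) * Complex.I) ≠ 0 :=
    mul_ne_zero (mul_ne_zero two_ne_zero (by exact_mod_cast Real.pi_ne_zero)) Complex.I_ne_zero
  have hNconst : ∀ t : ℝ, N t = N 0 := by
    set F : ℝ → ℝ := fun t => ((2 * (Real.pi:ℂ) * Complex.I)⁻¹ * Φ t).re with hF
    have hFc : Continuous F := Complex.continuous_re.comp (continuous_const.mul hΦcont)
    have hFn : ∀ t, F t = (N t : ℝ) := by
      intro t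
      rw [hF]
      simp only
      rw [hΦN t, inv_mul_cancel_left₀ h2piI]
      simp
    intro t
    have := const_of_nat_valued hFc (fun s => ⟨N s, hFn s⟩) t 0
    rw [hFn t, hFn 0] at this
    exact_mod_cast this
  refine ⟨N 0, ?_⟩
  intro α hα
  have hα2 : ((2*α : ℝ) : ℂ) = 2*(α:ℂ) := by push_cast; ring
  set t : ℝ := 2*α with ht
  have hexpne : Complex.exp (-(α:ℂ)*Complex.I) ≠ 0 := Complex.exp_ne_zero _
  -- the gradient identity
  have hgrad : ∀ z ∈ ball (0:ℂ) 1,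
      gradC (fun w => Real.cos α * (U w).re + Real.sin α * (U w).im) z =
        Complex.exp (-(α:ℂ)*Complex.I) * g t z := by
    intro z hz
    rw [gradC_alpha hU1 α hz, hgdef]
    simp only
    rw [ht, hα2]
  -- zero sets agree
  have hcrit : ∀ z ∈ ball (0:ℂ) 1,
      (g t z = 0 ↔ fderiv ℝ (fun w => Real.cos α * (U w).re + Real.sin α * (U w).im) z = 0) := by
    intro z hz
    constructor
    · intro h0
      have hg0 : gradC (fun w => Real.cos α * (U w).re + Real.sin α * (U w).im) z = 0 := by
        rw [hgrad z hz, h0, mul_zero]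
      have h1 := congrArg Complex.re hg0
      have h2 := congrArg Complex.im hg0
      simp [gradC] at h1 h2
      apply clm_ext_complex (S := 0)
      · simpa using h1
      · simpa using h2
    · intro h0
      have hg0 : gradC (fun w => Real.cos α * (U w).re + Real.sin α * (U w).im) z = 0 := by
        simp [gradC, h0]
      rw [hgrad z hz] at hg0
      exact (mul_eq_zero.1 hg0).resolve_left hexpne
  refine ⟨S t, mOrd (g t), ?_, ?_, ?_⟩
  · rw [hS1 t]
    ext z
    simp only [mem_setOf_eq]
    exact ⟨fun ⟨h1, h2⟩ => ⟨h1, (hcrit z h1).1 h2⟩, fun ⟨h1, h2⟩ => ⟨h1, (hcrit z h1).2 h2⟩⟩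
  · intro z hzS
    have hzb : z ∈ ball (0:ℂ) 1 := by
      have := hS3 t hzS
      exact closedBall_subset_ball hr₀1 this
    obtain ⟨h, han, hne, hev⟩ := hS4 t z hzS
    refine ⟨fun w => Complex.exp (-(α:ℂ)*Complex.I) * h w, analyticAt_const.mul han,
      mul_ne_zero hexpne hne, ?_⟩
    filter_upwards [hev, isOpen_ball.eventually_mem hzb] with w hw hwb
    rw [hgrad w hwb, hw]
    ring
  · exact hNconst t
end

section
/- Let U = (u,v) be harmonic in the unit disk B, C¹ up to the boundary, with det DU > 0 on ∂B. Then det DU > 0 everywhere in B if and only if there exists α ∈ [0,2π] such that ∇(cos(α)·u + sin(α)·v) ≠ 0 everywhere in B. -/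
open Complex Metric Set MeasureTheory Filter

lemma clmextE {E : Type*} [NormedAddCommGroup E] [NormedSpace ℝ E]
    (L L' : ℂ →L[ℝ] E) (h1 : L 1 = L' 1) (hI : L Complex.I = L' Complex.I) : L = L' := by
  ext z
  have hz : z = z.re • (1:ℂ) + z.im • Complex.I := by
    rw [Complex.real_smul, Complex.real_smul]; rw [mul_one]
    exact (Complex.re_add_im z).symm
  rw [hz, map_add, map_add, ContinuousLinearMap.map_smul, ContinuousLinearMap.map_smul,
    ContinuousLinearMap.map_smul, ContinuousLinearMap.map_smul, h1, hI]

lemma det2 (L : ℂ →L[ℝ] ℂ) :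
    LinearMap.det (L : ℂ →ₗ[ℝ] ℂ) =
      (L 1).re * (L Complex.I).im - (L 1).im * (L Complex.I).re := by
  rw [← LinearMap.det_toMatrix Complex.basisOneI, Matrix.det_fin_two]
  simp [LinearMap.toMatrix_apply, Complex.coe_basisOneI_repr, Complex.coe_basisOneI]
  ring

lemma harm_grad_holo {u : ℂ → ℝ} (hu : HarmOn u (ball (0:ℂ) 1)) :
    ∀ z ∈ ball (0:ℂ) 1, DifferentiableAt ℂ (gradC u) z := by
  intro z hz
  have hop : ball (0:ℂ) 1 ∈ nhds z := isOpen_ball.mem_nhds hz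
  have hcd : ContDiffAt ℝ 2 u z := hu.1.contDiffAt hop
  have hD : ContDiffAt ℝ 1 (fderiv ℝ u) z := hcd.fderiv_right (by norm_num)
  have hD' : HasFDerivAt (fderiv ℝ u) (fderiv ℝ (fderiv ℝ u) z) z :=
    (hD.differentiableAt one_ne_zero).hasFDerivAt
  set D' := fderiv ℝ (fderiv ℝ u) z with hD'def
  set A : ℂ →L[ℝ] ℂ :=
    Complex.ofRealCLM.comp ((ContinuousLinearMap.apply ℝ ℝ (1:ℂ)).comp D') with hA
  set B : ℂ →L[ℝ] ℂ :=
    Complex.ofRealCLM.comp ((ContinuousLinearMap.apply ℝ ℝ (Complex.I)).comp D') with hB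
  have hA' : HasFDerivAt (fun w => ((fderiv ℝ u w 1 : ℝ) : ℂ)) A z :=
    Complex.ofRealCLM.hasFDerivAt.comp z
      (((ContinuousLinearMap.apply ℝ ℝ (1:ℂ)).hasFDerivAt).comp z hD')
  have hB' : HasFDerivAt (fun w => ((fderiv ℝ u w Complex.I : ℝ) : ℂ)) B z :=
    Complex.ofRealCLM.hasFDerivAt.comp z
      (((ContinuousLinearMap.apply ℝ ℝ (Complex.I)).hasFDerivAt).comp z hD')
  have hL : HasFDerivAt (gradC u) (A - Complex.I • B) z := by
    have h2 : HasFDerivAt (fun w => ((fderiv ℝ u w Complex.I : ℝ) : ℂ) * Complex.I)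
        (Complex.I • B) z := by
      have := hB'.const_smul (Complex.I)
      simpa [Pi.smul_def, smul_eq_mul, mul_comm] using this
    exact hA'.sub h2
  have hpd2 : ∀ w : ℂ, pd2 u w z = D' w w := by
    intro w
    have : fderiv ℝ (fun x => fderiv ℝ u x w) z =
        (ContinuousLinearMap.apply ℝ ℝ w).comp D' :=
      (((ContinuousLinearMap.apply ℝ ℝ w).hasFDerivAt).comp z hD').fderiv
    rw [pd2, this]; rfl
  have hsym : D' Complex.I 1 = D' 1 Complex.I := hcd.isSymmSndFDerivAt (by simp) Complex.I 1
  have hlap : D' 1 1 + D' Complex.I Complex.I = 0 := by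
    have := hu.2 z hz
    rwa [hpd2 1, hpd2 Complex.I] at this
  set L := A - Complex.I • B with hLdef
  have hCR : L Complex.I = Complex.I * L 1 := by
    simp only [hLdef, hA, hB, ContinuousLinearMap.sub_apply, ContinuousLinearMap.smul_apply,
      ContinuousLinearMap.comp_apply, ContinuousLinearMap.apply_apply, Complex.ofRealCLM_apply,
      smul_eq_mul]
    rw [hsym]
    have hII : D' Complex.I Complex.I = -(D' 1 1) := by linarith
    rw [hII]
    apply Complex.ext <;> simp
  have hC : HasFDerivAt (𝕜 := ℂ) (gradC u) ((L 1) • (1 : ℂ →L[ℂ] ℂ)) z := by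
    apply hasFDerivAt_of_restrictScalars ℝ hL
    apply clmextE
    · simp [smul_eq_mul]
    · simp [smul_eq_mul, hCR, mul_comm]
  exact hC.differentiableAt

/-- `det DU > 0` everywhere in `B` iff some linear combination of the components has
no critical point in `B`. -/
theorem jacobian_pos_iff_exists_direction (U : ℂ → ℂ)
    (hU1 : ContDiffOn ℝ 1 U (closedBall (0:ℂ) 1))
    (hharm : HarmMapOn U (ball (0:ℂ) 1))
    (hjac : ∀ z ∈ sphere (0:ℂ) 1, 0 < jacDet U z) :
    (∀ z ∈ ball (0:ℂ) 1, 0 < jacDet U z) ↔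
      ∃ α ∈ Icc (0:ℝ) (2 * Real.pi), ∀ z ∈ ball (0:ℂ) 1,
        fderiv ℝ (fun w => Real.cos α * (U w).re + Real.sin α * (U w).im) z ≠ 0 := by
  have hud : UniqueDiffOn ℝ (closedBall (0:ℂ) 1) :=
    uniqueDiffOn_convex (convex_closedBall _ _)
      (by rw [interior_closedBall (0:ℂ) one_ne_zero]; exact ⟨0, mem_ball_self one_pos⟩)
  set W := fun z => fderivWithin ℝ U (closedBall (0:ℂ) 1) z with hW
  have hWc : ContinuousOn W (closedBall (0:ℂ) 1) :=
    hU1.continuousOn_fderivWithin hud le_rfl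
  have hball : ∀ z ∈ ball (0:ℂ) 1, closedBall (0:ℂ) 1 ∈ nhds z := fun z hz =>
    Filter.mem_of_superset (isOpen_ball.mem_nhds hz) ball_subset_closedBall
  have hWball : ∀ z ∈ ball (0:ℂ) 1, W z = fderiv ℝ U z := fun z hz =>
    fderivWithin_of_mem_nhds (hball z hz)
  have hUdiff : ∀ z ∈ ball (0:ℂ) 1, DifferentiableAt ℝ U z := fun z hz =>
    ((hU1.contDiffAt (hball z hz)).differentiableAt one_ne_zero)
  have jacId : ∀ z, jacDet U z =
      (W z 1).re * (W z Complex.I).im - (W z 1).im * (W z Complex.I).re :=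
    fun z => det2 _
  have hre : ∀ z ∈ ball (0:ℂ) 1,
      HasFDerivAt (fun w => (U w).re) (Complex.reCLM.comp (W z)) z := by
    intro z hz
    rw [hWball z hz]
    exact Complex.reCLM.hasFDerivAt.comp z (hUdiff z hz).hasFDerivAt
  have him : ∀ z ∈ ball (0:ℂ) 1,
      HasFDerivAt (fun w => (U w).im) (Complex.imCLM.comp (W z)) z := by
    intro z hz
    rw [hWball z hz]
    exact Complex.imCLM.hasFDerivAt.comp z (hUdiff z hz).hasFDerivAt
  constructor
  · -- easy direction: take α = 0
    intro h
    refine ⟨0, ⟨le_rfl, by positivity⟩, ?_⟩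
    intro z hz hcon
    have hfun : (fun w => Real.cos 0 * (U w).re + Real.sin 0 * (U w).im)
        = fun w => (U w).re := by
      funext w; simp
    rw [hfun] at hcon
    have hfd : fderiv ℝ (fun w => (U w).re) z = Complex.reCLM.comp (W z) :=
      (hre z hz).fderiv
    rw [hfd] at hcon
    have h1 : (W z 1).re = 0 := by
      have := congrArg (fun L => L 1) hcon; simpa using this
    have h2 : (W z Complex.I).re = 0 := by
      have := congrArg (fun L => L Complex.I) hcon; simpa using this
    have := h z hz
    rw [jacId z, h1, h2] at this
    simp at this
  · -- hard direction
    rintro ⟨α, _, hα⟩ z hz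
    set c := Real.cos α with hc
    set s := Real.sin α with hs
    have hcs : s ^ 2 + c ^ 2 = 1 := Real.sin_sq_add_cos_sq α
    -- the rotated complex gradients
    set Fa : ℂ → ℂ := fun z =>
      ((c * (W z 1).re + s * (W z 1).im : ℝ) : ℂ)
        - ((c * (W z Complex.I).re + s * (W z Complex.I).im : ℝ) : ℂ) * Complex.I with hFa
    set Ga : ℂ → ℂ := fun z =>
      ((-s * (W z 1).re + c * (W z 1).im : ℝ) : ℂ)
        - ((-s * (W z Complex.I).re + c * (W z Complex.I).im : ℝ) : ℂ) * Complex.I with hGa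
    -- jacDet = Im (Fa * conj Ga)
    have detFa : ∀ w, (Fa w * (starRingEnd ℂ) (Ga w)).im = jacDet U w := by
      intro w
      rw [jacId w]
      simp only [hFa, hGa, Complex.mul_im, Complex.sub_re, Complex.sub_im, Complex.ofReal_re,
        Complex.ofReal_im, Complex.mul_re, Complex.I_re, Complex.I_im, Complex.conj_re,
        Complex.conj_im]
      ring_nf
      linear_combination ((W w 1).re * (W w Complex.I).im
        - (W w 1).im * (W w Complex.I).re) * hcs
    -- Fa does not vanish on the sphere
    have FaS : ∀ w ∈ sphere (0:ℂ) 1, Fa w ≠ 0 := by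
      intro w hw hFw
      have hp : c * (W w 1).re + s * (W w 1).im = 0 := by
        have := congrArg Complex.re hFw; simpa [hFa] using this
      have hq : c * (W w Complex.I).re + s * (W w Complex.I).im = 0 := by
        have := congrArg Complex.im hFw; simp [hFa] at this; linarith
      have hdet := hjac w hw
      rw [jacId w] at hdet
      have : (W w 1).re * (W w Complex.I).im - (W w 1).im * (W w Complex.I).re = 0 := by
        linear_combination (c * (W w Complex.I).im - s * (W w Complex.I).re) * hp
          + (s * (W w 1).re - c * (W w 1).im) * hq
          - ((W w 1).re * (W w Complex.I).im - (W w 1).im * (W w Complex.I).re) * hcs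
      linarith
    -- Fa does not vanish on the ball
    have FaB : ∀ w ∈ ball (0:ℂ) 1, Fa w ≠ 0 := by
      intro w hw hFw
      have hp : c * (W w 1).re + s * (W w 1).im = 0 := by
        have := congrArg Complex.re hFw; simpa [hFa] using this
      have hq : c * (W w Complex.I).re + s * (W w Complex.I).im = 0 := by
        have := congrArg Complex.im hFw; simp [hFa] at this; linarith
      apply hα w hw
      have hda : HasFDerivAt (fun x => Real.cos α * (U x).re + Real.sin α * (U x).im)
          (c • (Complex.reCLM.comp (W w)) + s • (Complex.imCLM.comp (W w))) w := by
        exact ((hre w hw).const_mul c).add ((him w hw).const_mul s)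
      rw [hda.fderiv]
      apply clmextE
      · simpa using hp
      · simpa using hq
    have FacB : ∀ w ∈ closedBall (0:ℂ) 1, Fa w ≠ 0 := by
      intro w hw
      rcases lt_or_eq_of_le (mem_closedBall.mp hw) with h | h
      · exact FaB w (mem_ball.mpr h)
      · exact FaS w (mem_sphere.mpr h)
    -- continuity of Fa, Ga on the closed ball
    have hWa : ∀ v : ℂ, ContinuousOn (fun w => W w v) (closedBall (0:ℂ) 1) := by
      intro v
      exact hWc.clm_apply continuousOn_const
    have h1re : ContinuousOn (fun w => (W w 1).re) (closedBall (0:ℂ) 1) :=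
      Complex.continuous_re.comp_continuousOn (hWa 1)
    have h1im : ContinuousOn (fun w => (W w 1).im) (closedBall (0:ℂ) 1) :=
      Complex.continuous_im.comp_continuousOn (hWa 1)
    have hIre : ContinuousOn (fun w => (W w Complex.I).re) (closedBall (0:ℂ) 1) :=
      Complex.continuous_re.comp_continuousOn (hWa Complex.I)
    have hIim : ContinuousOn (fun w => (W w Complex.I).im) (closedBall (0:ℂ) 1) :=
      Complex.continuous_im.comp_continuousOn (hWa Complex.I)
    have hFc : ContinuousOn Fa (closedBall (0:ℂ) 1) := by
      apply ContinuousOn.sub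
      · exact Complex.continuous_ofReal.comp_continuousOn
          ((continuousOn_const.mul h1re).add (continuousOn_const.mul h1im))
      · exact (Complex.continuous_ofReal.comp_continuousOn
          ((continuousOn_const.mul hIre).add (continuousOn_const.mul hIim))).mul
          continuousOn_const
    have hGc : ContinuousOn Ga (closedBall (0:ℂ) 1) := by
      apply ContinuousOn.sub
      · exact Complex.continuous_ofReal.comp_continuousOn
          ((continuousOn_const.mul h1re).add (continuousOn_const.mul h1im))
      · exact (Complex.continuous_ofReal.comp_continuousOn
          ((continuousOn_const.mul hIre).add (continuousOn_const.mul hIim))).mul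
          continuousOn_const
    -- gradC of the components in terms of W
    have hgradu : ∀ w ∈ ball (0:ℂ) 1, gradC (fun z => (U z).re) w =
        ((W w 1).re : ℂ) - ((W w Complex.I).re : ℂ) * Complex.I := by
      intro w hw
      rw [gradC, (hre w hw).fderiv]
      simp
    have hgradv : ∀ w ∈ ball (0:ℂ) 1, gradC (fun z => (U z).im) w =
        ((W w 1).im : ℂ) - ((W w Complex.I).im : ℂ) * Complex.I := by
      intro w hw
      rw [gradC, (him w hw).fderiv]
      simp
    -- Fa, Ga agree with holomorphic combinations on the ball
    have Faeq : ∀ w ∈ ball (0:ℂ) 1, Fa w =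
        c • gradC (fun z => (U z).re) w + s • gradC (fun z => (U z).im) w := by
      intro w hw
      rw [hgradu w hw, hgradv w hw]
      simp only [hFa, Complex.real_smul]
      push_cast
      ring
    have Gaeq : ∀ w ∈ ball (0:ℂ) 1, Ga w =
        (-s) • gradC (fun z => (U z).re) w + c • gradC (fun z => (U z).im) w := by
      intro w hw
      rw [hgradu w hw, hgradv w hw]
      simp only [hGa, Complex.real_smul]
      push_cast
      ring
    have hFd : DifferentiableOn ℂ Fa (ball (0:ℂ) 1) := by
      intro w hw
      have hd : DifferentiableAt ℂ (fun x => c • gradC (fun z => (U z).re) x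
          + s • gradC (fun z => (U z).im) x) w :=
        ((harm_grad_holo hharm.1 w hw).const_smul c).add
          ((harm_grad_holo hharm.2 w hw).const_smul s)
      have hev : Fa =ᶠ[nhds w] (fun x => c • gradC (fun z => (U z).re) x
          + s • gradC (fun z => (U z).im) x) :=
        Filter.eventuallyEq_of_mem (isOpen_ball.mem_nhds hw) (fun x hx => Faeq x hx)
      exact (hd.congr_of_eventuallyEq hev).differentiableWithinAt
    have hGd : DifferentiableOn ℂ Ga (ball (0:ℂ) 1) := by
      intro w hw
      have hd : DifferentiableAt ℂ (fun x => (-s) • gradC (fun z => (U z).re) x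
          + c • gradC (fun z => (U z).im) x) w :=
        ((harm_grad_holo hharm.1 w hw).const_smul (-s)).add
          ((harm_grad_holo hharm.2 w hw).const_smul c)
      have hev : Ga =ᶠ[nhds w] (fun x => (-s) • gradC (fun z => (U z).re) x
          + c • gradC (fun z => (U z).im) x) :=
        Filter.eventuallyEq_of_mem (isOpen_ball.mem_nhds hw) (fun x hx => Gaeq x hx)
      exact (hd.congr_of_eventuallyEq hev).differentiableWithinAt
    -- the holomorphic quotient and its exponential
    set h : ℂ → ℂ := fun w => -Ga w / Fa w with hh
    have hhd : DifferentiableOn ℂ h (ball (0:ℂ) 1) :=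
      hGd.neg.div hFd (fun w hw => FaB w hw)
    have hhc : ContinuousOn h (closedBall (0:ℂ) 1) := hGc.neg.div hFc FacB
    set φ : ℂ → ℂ := fun w => Complex.exp (Complex.I * h w) with hφdef
    have hφd : DifferentiableOn ℂ φ (ball (0:ℂ) 1) :=
      ((differentiableOn_const _).mul hhd).cexp
    have hφc : ContinuousOn φ (closedBall (0:ℂ) 1) :=
      Complex.continuous_exp.comp_continuousOn (continuousOn_const.mul hhc)
    have hφ : DiffContOnCl ℂ φ (ball (0:ℂ) 1) :=
      ⟨hφd, by rwa [closure_ball (0:ℂ) one_ne_zero]⟩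
    have hnorm : ∀ w, ‖φ w‖ = Real.exp (-(h w).im) := by
      intro w
      rw [hφdef]
      simp only [Complex.norm_exp]
      congr 1
      simp [Complex.mul_re]
    have hIm : ∀ w, Fa w ≠ 0 →
        (h w).im * Complex.normSq (Fa w) = (Fa w * (starRingEnd ℂ) (Ga w)).im := by
      intro w hw
      have hN : Complex.normSq (Fa w) ≠ 0 := (Complex.normSq_pos.mpr hw).ne'
      rw [hh]
      simp only [Complex.div_im, Complex.neg_re, Complex.neg_im, Complex.mul_im,
        Complex.conj_re, Complex.conj_im]
      field_simp
      ring
    -- maximum of ‖φ‖ on the sphere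
    obtain ⟨z₀, hz₀s, hz₀max⟩ := (isCompact_sphere (0:ℂ) 1).exists_isMaxOn
      ⟨1, by simp⟩ (hφc.norm.mono sphere_subset_closedBall)
    have hmaxall : ∀ w ∈ closure (ball (0:ℂ) 1), ‖φ w‖ ≤ ‖φ z₀‖ := by
      intro w hw
      apply Complex.norm_le_of_forall_mem_frontier_norm_le isBounded_ball hφ _ hw
      intro x hx
      rw [frontier_ball (0:ℂ) one_ne_zero] at hx
      exact hz₀max hx
    have hN₀ : 0 < Complex.normSq (Fa z₀) := Complex.normSq_pos.mpr (FaS z₀ hz₀s)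
    have hid₀ := hIm z₀ (FaS z₀ hz₀s)
    rw [detFa z₀] at hid₀
    have himz₀ : 0 < (h z₀).im := by nlinarith [hjac z₀ hz₀s]
    have hle : ‖φ z‖ ≤ ‖φ z₀‖ := hmaxall z (subset_closure hz)
    rw [hnorm z, hnorm z₀] at hle
    have himz : (h z₀).im ≤ (h z).im := by
      have := Real.exp_le_exp.mp hle; linarith
    have hNz : 0 < Complex.normSq (Fa z) := Complex.normSq_pos.mpr (FaB z hz)
    have hidz := hIm z (FaB z hz)
    rw [detFa z] at hidz
    nlinarith
end

section
/- Let u ∈ C¹ up to the boundary of the unit disk B be harmonic in B with ∇u ≠ 0 on ∂B. Let ũ be a harmonic conjugate of u and f = u + i·ũ. Then the sum M of the multiplicities of the critical points of u in B equals WN(f(∂B)) − 1, where WN denotes the winding number (1/2π)∮_{∂B} d arg(∂f/∂θ) of the tangent vector of the closed curve f|∂B. -/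
open Complex Metric Set MeasureTheory Filter

namespace CWH

/-- `a` is a continuous argument (lift) of the curve `γ`. -/
def IsLift (γ : ℝ → ℂ) (a : ℝ → ℝ) : Prop :=
  Continuous a ∧ ∀ θ, γ θ = (‖γ θ‖ : ℂ) * Complex.exp ((a θ : ℂ) * Complex.I)

theorem IsLift.mul {γ₁ γ₂ : ℝ → ℂ} {a₁ a₂ : ℝ → ℝ} (h₁ : IsLift γ₁ a₁) (h₂ : IsLift γ₂ a₂) :
    IsLift (fun θ => γ₁ θ * γ₂ θ) (fun θ => a₁ θ + a₂ θ) := by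
  refine ⟨h₁.1.add h₂.1, fun θ => ?_⟩
  have e1 := h₁.2 θ; have e2 := h₂.2 θ
  calc γ₁ θ * γ₂ θ = ((‖γ₁ θ‖ : ℂ) * Complex.exp ((a₁ θ : ℂ) * Complex.I)) *
      ((‖γ₂ θ‖ : ℂ) * Complex.exp ((a₂ θ : ℂ) * Complex.I)) := by rw [← e1, ← e2]
    _ = (‖γ₁ θ * γ₂ θ‖ : ℂ) * Complex.exp ((↑(a₁ θ + a₂ θ) : ℂ) * Complex.I) := by
        rw [norm_mul]; push_cast; rw [add_mul, Complex.exp_add]; ring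

theorem IsLift.prod {ι : Type*} [DecidableEq ι] (s : Finset ι) (γ : ι → ℝ → ℂ) (a : ι → ℝ → ℝ)
    (h : ∀ i ∈ s, IsLift (γ i) (a i)) :
    IsLift (fun θ => ∏ i ∈ s, γ i θ) (fun θ => ∑ i ∈ s, a i θ) := by
  induction s using Finset.induction with
  | empty => exact ⟨continuous_const, fun θ => by simp⟩
  | @insert j t hni ih =>
    simp only [Finset.prod_insert hni, Finset.sum_insert hni]
    exact (h j (Finset.mem_insert_self j t)).mul
      (ih fun i hi => h i (Finset.mem_insert_of_mem hi))

theorem IsLift.pow {γ : ℝ → ℂ} {a : ℝ → ℝ} (h : IsLift γ a) (k : ℕ) :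
    IsLift (fun θ => γ θ ^ k) (fun θ => (k : ℝ) * a θ) := by
  have := IsLift.prod (Finset.range k) (fun _ => γ) (fun _ => a) (fun i _ => h)
  simp only [Finset.prod_const, Finset.card_range, Finset.sum_const, nsmul_eq_mul] at this
  exact this

/-- Uniqueness of lifts up to a constant. -/
theorem lift_unique {γ : ℝ → ℂ} {a b : ℝ → ℝ} (ha : IsLift γ a) (hb : IsLift γ b)
    (hne : ∀ θ, γ θ ≠ 0) : ∀ θ, a θ - b θ = a 0 - b 0 := by
  have key : ∀ θ, ∃ k : ℤ, a θ - b θ = k * (2 * Real.pi) := by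
    intro θ
    have e1 := ha.2 θ; have e2 := hb.2 θ
    have habs : (‖γ θ‖ : ℂ) ≠ 0 := by
      simpa using (norm_ne_zero_iff.mpr (hne θ))
    have hee : Complex.exp ((a θ : ℂ) * Complex.I) = Complex.exp ((b θ : ℂ) * Complex.I) := by
      apply mul_left_cancel₀ habs; rw [← e1, ← e2]
    have h1 : Complex.exp ((a θ : ℂ) * Complex.I - (b θ : ℂ) * Complex.I) = 1 := by
      rw [Complex.exp_sub, hee, div_self (Complex.exp_ne_zero _)]
    rw [Complex.exp_eq_one_iff] at h1
    obtain ⟨k, hk⟩ := h1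
    refine ⟨k, ?_⟩
    have hc : ((a θ - b θ : ℝ) : ℂ) * Complex.I = ((k * (2 * Real.pi) : ℝ) : ℂ) * Complex.I := by
      push_cast
      rw [sub_mul, hk]; ring
    have := mul_right_cancel₀ Complex.I_ne_zero hc
    exact_mod_cast this
  set d : ℝ → ℝ := fun θ => a θ - b θ with hd
  have hdc : Continuous d := ha.1.sub hb.1
  have hopen : IsOpen {θ | d θ = d 0} := by
    rw [isOpen_iff_forall_mem_open]
    intro θ₀ hθ₀
    obtain ⟨ε, hε, hball⟩ := Metric.continuousAt_iff.mp (hdc.continuousAt (x := θ₀))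
        (2 * Real.pi) (by positivity)
    refine ⟨Metric.ball θ₀ ε, ?_, Metric.isOpen_ball, Metric.mem_ball_self hε⟩
    intro θ hθ
    obtain ⟨k, hk⟩ := key θ; obtain ⟨k₀, hk₀⟩ := key θ₀
    have hlt : |d θ - d θ₀| < 2 * Real.pi := by
      have := hball hθ; rwa [Real.dist_eq] at this
    have heq : d θ = d θ₀ := by
      show a θ - b θ = a θ₀ - b θ₀
      simp only [hd] at hlt
      rw [hk, hk₀] at hlt ⊢
      have h2 : |((k : ℝ) - k₀)| * (2 * Real.pi) < 2 * Real.pi := by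
        have h2' : |((k : ℝ) - k₀) * (2 * Real.pi)| < 2 * Real.pi := by
          rw [sub_mul]; exact hlt
        rwa [abs_mul, abs_of_pos (by positivity : (0:ℝ) < 2 * Real.pi)] at h2'
      have hkk : |(k : ℝ) - k₀| < 1 := by
        nlinarith [Real.pi_pos, abs_nonneg ((k:ℝ) - k₀)]
      have : k = k₀ := by
        have h3 : |((k - k₀ : ℤ) : ℝ)| < 1 := by push_cast; exact hkk
        have h4 := abs_lt.mp h3
        have h5 : (-1 : ℤ) < k - k₀ := by exact_mod_cast h4.1
        have h6 : (k - k₀ : ℤ) < 1 := by exact_mod_cast h4.2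
        omega
      rw [this]
    simp only [mem_setOf_eq] at hθ₀ ⊢
    rw [heq, hθ₀]
  have hclosed : IsClosed {θ | d θ = d 0} := isClosed_eq hdc continuous_const
  have : {θ | d θ = d 0} = univ :=
    IsClopen.eq_univ ⟨hclosed, hopen⟩ ⟨0, rfl⟩
  intro θ
  have : θ ∈ {θ | d θ = d 0} := this ▸ mem_univ θ
  simpa [hd] using this

end CWH

namespace CWH
open Complex

theorem lift_linear {ζ : ℂ} (hζ : ‖ζ‖ < 1) :
    IsLift (fun θ => Complex.exp ((θ:ℂ) * Complex.I) - ζ)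
      (fun θ => θ + Complex.arg (1 - ζ * Complex.exp (-((θ:ℂ) * Complex.I)))) := by
  have hw : ∀ θ : ℝ, 0 < (1 - ζ * Complex.exp (-((θ:ℂ) * Complex.I))).re := by
    intro θ
    have h1 : ‖ζ * Complex.exp (-((θ:ℂ) * Complex.I))‖ < 1 := by
      rw [norm_mul]
      have : Complex.exp (-((θ:ℂ) * Complex.I)) = Complex.exp (((-θ : ℝ) :ℂ) * Complex.I) := by
        push_cast; ring_nf
      rw [this, Complex.norm_exp_ofReal_mul_I, mul_one]; exact hζ
    have h2 : (ζ * Complex.exp (-((θ:ℂ) * Complex.I))).re < 1 :=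
      lt_of_le_of_lt (le_trans (le_abs_self _) (Complex.abs_re_le_norm _)) h1
    simp only [Complex.sub_re, Complex.one_re]
    linarith
  constructor
  · apply continuous_id.add
    rw [continuous_iff_continuousAt]
    intro θ
    exact ContinuousAt.comp (x := θ) (g := Complex.arg)
      (f := fun θ : ℝ => 1 - ζ * Complex.exp (-((θ:ℂ) * Complex.I)))
      (Complex.continuousAt_arg (Or.inl (hw θ)))
      ((by continuity : Continuous fun θ : ℝ => 1 - ζ * Complex.exp (-((θ:ℂ) * Complex.I))).continuousAt)
  · intro θ
    set w : ℂ := 1 - ζ * Complex.exp (-((θ:ℂ) * Complex.I)) with hwdef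
    have hfac : Complex.exp ((θ:ℂ) * Complex.I) - ζ = Complex.exp ((θ:ℂ) * Complex.I) * w := by
      rw [hwdef, mul_sub, mul_one]
      have : Complex.exp ((θ:ℂ) * Complex.I) * (ζ * Complex.exp (-((θ:ℂ) * Complex.I))) = ζ := by
        rw [mul_comm ζ, ← mul_assoc, ← Complex.exp_add]
        simp
      rw [this]
    have habsw : ‖Complex.exp ((θ:ℂ) * Complex.I) - ζ‖ = ‖w‖ := by
      rw [hfac, norm_mul, Complex.norm_exp_ofReal_mul_I, one_mul]
    show Complex.exp ((θ:ℂ) * Complex.I) - ζ =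
      (‖Complex.exp ((θ:ℂ) * Complex.I) - ζ‖ : ℂ) *
        Complex.exp ((↑(θ + Complex.arg w) : ℂ) * Complex.I)
    rw [habsw, hfac]
    have harg : w = (‖w‖ : ℂ) * Complex.exp ((Complex.arg w : ℂ) * Complex.I) :=
      (Complex.norm_mul_exp_arg_mul_I w).symm
    calc Complex.exp ((θ:ℂ) * Complex.I) * w
        = Complex.exp ((θ:ℂ) * Complex.I) *
            ((‖w‖ : ℂ) * Complex.exp ((Complex.arg w : ℂ) * Complex.I)) := by
          conv_lhs => rw [harg]
      _ = (‖w‖ : ℂ) * Complex.exp ((θ:ℂ) * Complex.I + (Complex.arg w : ℂ) * Complex.I) := by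
          rw [Complex.exp_add]; ring
      _ = (‖w‖ : ℂ) * Complex.exp ((↑(θ + Complex.arg w) : ℂ) * Complex.I) := by
          push_cast; ring_nf

end CWH

namespace CWH

theorem tele (ψ : ℕ → ℂ) (N : ℕ) (hψ : ∀ k ≤ N, ψ k ≠ 0) :
    ∏ k ∈ Finset.range N, (ψ (k+1) / ψ k) = ψ N / ψ 0 := by
  induction N with
  | zero => simp [div_self (hψ 0 le_rfl)]
  | succ N ih =>
    rw [Finset.prod_range_succ, ih (fun k hk => hψ k (hk.trans (Nat.le_succ N)))]
    have h0 := hψ 0 (Nat.zero_le _)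
    have hN := hψ N (Nat.le_succ N)
    field_simp

/-- A continuous nonvanishing function on the closed unit disk has a continuous logarithm. -/
theorem exists_log {G : ℂ → ℂ} (hG : ContinuousOn G (closedBall (0:ℂ) 1))
    (hne : ∀ z ∈ closedBall (0:ℂ) 1, G z ≠ 0) :
    ∃ L : ℂ → ℂ, ContinuousOn L (closedBall (0:ℂ) 1) ∧
      ∀ z ∈ closedBall (0:ℂ) 1, Complex.exp (L z) = G z := by
  have hcpt : IsCompact (closedBall (0:ℂ) 1) := isCompact_closedBall _ _
  obtain ⟨z₀, hz₀, hmin⟩ := hcpt.exists_isMinOn ⟨0, mem_closedBall_self zero_le_one⟩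
    (continuous_norm.comp_continuousOn hG)
  set mB : ℝ := ‖G z₀‖ with hmB
  have hmBpos : 0 < mB := by
    simpa [hmB] using norm_pos_iff.mpr (hne z₀ hz₀)
  have huc := hcpt.uniformContinuousOn_of_continuous hG
  rw [Metric.uniformContinuousOn_iff] at huc
  obtain ⟨δ, hδpos, hδ⟩ := huc mB hmBpos
  obtain ⟨n, hn⟩ := exists_nat_one_div_lt hδpos
  set N : ℕ := n + 1 with hN
  have hNpos : (0:ℝ) < N := by positivity
  -- the scaled points
  have hptmem : ∀ (k : ℕ), k ≤ N → ∀ z ∈ closedBall (0:ℂ) 1,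
      ((k : ℂ) / (N : ℂ)) * z ∈ closedBall (0:ℂ) 1 := by
    intro k hk z hz
    rw [mem_closedBall_zero_iff] at hz ⊢
    rw [norm_mul]
    have h1 : ‖((k : ℂ) / (N : ℂ))‖ ≤ 1 := by
      rw [norm_div]
      simp only [Complex.norm_natCast]
      rw [div_le_one hNpos]
      exact_mod_cast hk
    calc ‖((k : ℂ) / (N : ℂ))‖ * ‖z‖ ≤ 1 * 1 :=
      mul_le_mul h1 hz (norm_nonneg _) zero_le_one
    _ = 1 := one_mul 1
  have hGne : ∀ (k : ℕ), k ≤ N → ∀ z ∈ closedBall (0:ℂ) 1,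
      G (((k : ℂ) / (N : ℂ)) * z) ≠ 0 := fun k hk z hz => hne _ (hptmem k hk z hz)
  -- the ratios have positive real part
  have hratio : ∀ (k : ℕ), k < N → ∀ z ∈ closedBall (0:ℂ) 1,
      0 < (G ((((k:ℕ)+1 : ℂ) / (N : ℂ)) * z) / G (((k : ℂ) / (N : ℂ)) * z)).re := by
    intro k hk z hz
    set a : ℂ := (((k:ℕ)+1 : ℂ) / (N : ℂ)) * z
    set b : ℂ := ((k : ℂ) / (N : ℂ)) * z
    have ha : a ∈ closedBall (0:ℂ) 1 := by
      have h := hptmem (k+1) hk z hz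
      rw [Nat.cast_add, Nat.cast_one] at h
      exact h
    have hb : b ∈ closedBall (0:ℂ) 1 := hptmem k hk.le z hz
    have hdist : dist a b < δ := by
      rw [dist_eq_norm]
      have : a - b = (1 / (N:ℂ)) * z := by
        field_simp [a, b]
        ring
      rw [this, norm_mul]
      have hz1 : ‖z‖ ≤ 1 := by rwa [← mem_closedBall_zero_iff]
      have : ‖(1 / (N:ℂ))‖ = 1 / (N:ℝ) := by
        rw [norm_div, norm_one]; simp
      rw [this]
      calc 1 / (N:ℝ) * ‖z‖ ≤ 1 / (N:ℝ) * 1 := by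
            apply mul_le_mul_of_nonneg_left hz1; positivity
        _ = 1 / (N:ℝ) := mul_one _
        _ < δ := by
            rw [hN]; push_cast; exact hn
    have hGb := hne b hb
    have hGbabs : mB ≤ ‖G b‖ := hmin hb
    have hclose : ‖G a - G b‖ < mB := by
      have := hδ a ha b hb hdist
      rwa [Complex.dist_eq] at this
    have h1 : ‖G a / G b - 1‖ < 1 := by
      rw [div_sub_one hGb, norm_div]
      rw [div_lt_one (norm_pos_iff.mpr hGb)]
      exact lt_of_lt_of_le hclose hGbabs
    have h2 : |(G a / G b - 1).re| < 1 :=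
      lt_of_le_of_lt (Complex.abs_re_le_norm _) h1
    have := (abs_lt.mp h2).1
    simp only [Complex.sub_re, Complex.one_re] at this
    linarith
  refine ⟨fun z => Complex.log (G 0) + ∑ k ∈ Finset.range N,
      Complex.log (G ((((k:ℕ)+1 : ℂ) / (N : ℂ)) * z) / G (((k : ℂ) / (N : ℂ)) * z)), ?_, ?_⟩
  · apply ContinuousOn.add continuousOn_const
    apply continuousOn_finset_sum
    intro k hk
    rw [Finset.mem_range] at hk
    apply ContinuousOn.clog
    · apply ContinuousOn.div
      · exact hG.comp (continuous_const.mul continuous_id).continuousOn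
          (fun z hz => by
            have := hptmem (k+1) hk z hz; push_cast at this ⊢; exact this)
      · exact hG.comp (continuous_const.mul continuous_id).continuousOn
          (fun z hz => hptmem k hk.le z hz)
      · intro z hz
        exact hGne k hk.le z hz
    · intro z hz
      exact Or.inl (hratio k hk z hz)
  · intro z hz
    rw [Complex.exp_add, Complex.exp_sum]
    have hlog1 : Complex.exp (Complex.log (G 0)) = G 0 :=
      Complex.exp_log (hne 0 (mem_closedBall_self zero_le_one))
    rw [hlog1]
    have hlog2 : ∀ k ∈ Finset.range N,
        Complex.exp (Complex.log (G ((((k:ℕ)+1 : ℂ) / (N : ℂ)) * z) / G (((k : ℂ) / (N : ℂ)) * z)))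
          = G ((((k:ℕ)+1 : ℂ) / (N : ℂ)) * z) / G (((k : ℂ) / (N : ℂ)) * z) := by
      intro k hk
      rw [Finset.mem_range] at hk
      apply Complex.exp_log
      apply div_ne_zero
      · have := hGne (k+1) hk z hz; push_cast at this ⊢; exact this
      · exact hGne k hk.le z hz
    rw [Finset.prod_congr rfl hlog2]
    have := tele (fun k => G (((k : ℂ) / (N : ℂ)) * z)) N
      (fun k hk => hGne k hk z hz)
    simp only [Nat.cast_add, Nat.cast_one] at this ⊢
    have hψN : ((N : ℂ) / (N : ℂ)) * z = z := by
      rw [div_self (by exact_mod_cast hNpos.ne' : (N:ℂ) ≠ 0), one_mul]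
    have hψ0 : ((0 : ℂ) / (N : ℂ)) * z = 0 := by simp
    rw [Nat.cast_zero, hψ0, hψN] at this
    rw [this]
    field_simp [hne 0 (mem_closedBall_self zero_le_one)]

end CWH

namespace CWH

theorem clm_basis {M : Type*} [AddCommGroup M] [Module ℝ M] [TopologicalSpace M]
    (T : ℂ →L[ℝ] M) (w : ℂ) : T w = w.re • T 1 + w.im • T Complex.I := by
  have hw : w = w.re • (1:ℂ) + w.im • Complex.I := by
    simp only [Complex.real_smul, smul_eq_mul, mul_one]
    exact (Complex.re_add_im w).symm
  conv_lhs => rw [hw]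
  rw [map_add, T.map_smul, T.map_smul]

theorem eq_zero_on_closedBall {g : ℂ → ℝ} (hg : ContinuousOn g (closedBall (0:ℂ) 1))
    (h0 : ∀ z ∈ ball (0:ℂ) 1, g z = 0) : ∀ z ∈ closedBall (0:ℂ) 1, g z = 0 := by
  intro z hz
  have hcl : z ∈ closure (ball (0:ℂ) 1) := by
    rw [closure_ball (0:ℂ) one_ne_zero]; exact hz
  have hne : (nhdsWithin z (ball (0:ℂ) 1)).NeBot :=
    mem_closure_iff_nhdsWithin_neBot.mp hcl
  have h1 : Tendsto g (nhdsWithin z (ball (0:ℂ) 1)) (nhds (g z)) := by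
    apply Tendsto.mono_left (hg z hz)
    exact nhdsWithin_mono z ball_subset_closedBall
  have h2 : Tendsto g (nhdsWithin z (ball (0:ℂ) 1)) (nhds 0) := by
    apply Tendsto.congr' _ tendsto_const_nhds
    filter_upwards [self_mem_nhdsWithin] with w hw
    exact (h0 w hw).symm
  exact tendsto_nhds_unique h1 h2

theorem hasDerivAt_circleMap (θ : ℝ) :
    HasDerivAt (fun t : ℝ => Complex.exp ((t:ℂ) * Complex.I))
      (Complex.exp ((θ:ℂ) * Complex.I) * Complex.I) θ := by
  have h1 : HasDerivAt (fun t : ℝ => (t:ℂ)) 1 θ := (hasDerivAt_id θ).ofReal_comp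
  have h2 : HasDerivAt (fun t : ℝ => (t:ℂ) * Complex.I) Complex.I θ := by
    simpa using h1.mul_const Complex.I
  simpa using h2.cexp

end CWH

open Complex Metric Set Filter

namespace CWH

noncomputable def Fg (u : ℂ → ℝ) (z : ℂ) : ℂ :=
  (fderivWithin ℝ u (closedBall (0:ℂ) 1) z 1 : ℂ) -
  (fderivWithin ℝ u (closedBall (0:ℂ) 1) z Complex.I : ℂ) * Complex.I

theorem uniqueDiffOn_cb : UniqueDiffOn ℝ (closedBall (0:ℂ) 1) := by
  apply uniqueDiffOn_convex (convex_closedBall _ _)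
  rw [interior_closedBall _ one_ne_zero]
  exact ⟨0, mem_ball_self one_pos⟩

theorem cb_mem_nhds {z : ℂ} (hz : z ∈ ball (0:ℂ) 1) : closedBall (0:ℂ) 1 ∈ nhds z :=
  mem_nhds_iff.mpr ⟨ball (0:ℂ) 1, ball_subset_closedBall, isOpen_ball, hz⟩

theorem Fg_continuousOn {u : ℂ → ℝ} (hu1 : ContDiffOn ℝ 1 u (closedBall (0:ℂ) 1)) :
    ContinuousOn (Fg u) (closedBall (0:ℂ) 1) := by
  have h := hu1.continuousOn_fderivWithin uniqueDiffOn_cb le_rfl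
  have h1 : ContinuousOn (fun z => (fderivWithin ℝ u (closedBall (0:ℂ) 1) z 1 : ℝ))
      (closedBall (0:ℂ) 1) := h.clm_apply continuousOn_const
  have h2 : ContinuousOn (fun z => (fderivWithin ℝ u (closedBall (0:ℂ) 1) z Complex.I : ℝ))
      (closedBall (0:ℂ) 1) := h.clm_apply continuousOn_const
  exact ((Complex.continuous_ofReal.comp_continuousOn h1)).sub
    ((Complex.continuous_ofReal.comp_continuousOn h2).mul continuousOn_const)

theorem CR_closed {u uConj : ℂ → ℝ}
    (hu1 : ContDiffOn ℝ 1 u (closedBall (0:ℂ) 1))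
    (huConj1 : ContDiffOn ℝ 1 uConj (closedBall (0:ℂ) 1))
    (hconj : IsConjOn u uConj (ball (0:ℂ) 1)) :
    ∀ z ∈ closedBall (0:ℂ) 1,
      fderivWithin ℝ uConj (closedBall (0:ℂ) 1) z 1 =
        -(fderivWithin ℝ u (closedBall (0:ℂ) 1) z Complex.I) ∧
      fderivWithin ℝ uConj (closedBall (0:ℂ) 1) z Complex.I =
        fderivWithin ℝ u (closedBall (0:ℂ) 1) z 1 := by
  have hDu := hu1.continuousOn_fderivWithin uniqueDiffOn_cb le_rfl
  have hDv := huConj1.continuousOn_fderivWithin uniqueDiffOn_cb le_rfl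
  have hball : ∀ z ∈ ball (0:ℂ) 1, ∀ (g : ℂ → ℝ),
      fderivWithin ℝ g (closedBall (0:ℂ) 1) z = fderiv ℝ g z :=
    fun z hz g => fderivWithin_of_mem_nhds (cb_mem_nhds hz)
  have key : ∀ (w₁ w₂ : ℂ), (∀ z ∈ ball (0:ℂ) 1,
        fderivWithin ℝ uConj (closedBall (0:ℂ) 1) z w₁ -
          fderivWithin ℝ u (closedBall (0:ℂ) 1) z w₂ = 0) →
      ∀ z ∈ closedBall (0:ℂ) 1,
        fderivWithin ℝ uConj (closedBall (0:ℂ) 1) z w₁ =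
          fderivWithin ℝ u (closedBall (0:ℂ) 1) z w₂ := by
    intro w₁ w₂ h0 z hz
    have := eq_zero_on_closedBall (g := fun z =>
        fderivWithin ℝ uConj (closedBall (0:ℂ) 1) z w₁ -
          fderivWithin ℝ u (closedBall (0:ℂ) 1) z w₂)
      ((hDv.clm_apply continuousOn_const).sub (hDu.clm_apply continuousOn_const)) h0 z hz
    linarith
  intro z hz
  constructor
  · have := key 1 (-Complex.I) (fun w hw => by
      rw [hball w hw uConj, hball w hw u, map_neg, (hconj.2 w hw).1]
      ring) z hz
    rw [this, map_neg]
  · exact key Complex.I 1 (fun w hw => by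
      rw [hball w hw uConj, hball w hw u, (hconj.2 w hw).2]
      ring) z hz

theorem exp_mem_cb (θ : ℝ) : Complex.exp ((θ:ℂ) * Complex.I) ∈ closedBall (0:ℂ) 1 := by
  rw [mem_closedBall_zero_iff]
  simp [Complex.norm_exp_ofReal_mul_I]

theorem exp_mem_sphere (θ : ℝ) : Complex.exp ((θ:ℂ) * Complex.I) ∈ sphere (0:ℂ) 1 := by
  rw [mem_sphere_zero_iff_norm]
  simp [Complex.norm_exp_ofReal_mul_I]

theorem tangent_deriv {u uConj : ℂ → ℝ} {f : ℂ → ℂ}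
    (hu1 : ContDiffOn ℝ 1 u (closedBall (0:ℂ) 1))
    (huConj1 : ContDiffOn ℝ 1 uConj (closedBall (0:ℂ) 1))
    (hconj : IsConjOn u uConj (ball (0:ℂ) 1))
    (hf : ∀ z, f z = (u z : ℂ) + (uConj z : ℂ) * Complex.I) (θ : ℝ) :
    HasDerivAt (fun t : ℝ => f (Complex.exp ((t:ℂ) * Complex.I)))
      (Complex.I * Complex.exp ((θ:ℂ) * Complex.I) *
        Fg u (Complex.exp ((θ:ℂ) * Complex.I))) θ := by
  set z₀ : ℂ := Complex.exp ((θ:ℂ) * Complex.I) with hz₀def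
  have hz₀ : z₀ ∈ closedBall (0:ℂ) 1 := exp_mem_cb θ
  set Du := fderivWithin ℝ u (closedBall (0:ℂ) 1) z₀ with hDudef
  set Dv := fderivWithin ℝ uConj (closedBall (0:ℂ) 1) z₀ with hDvdef
  have hCR := CR_closed hu1 huConj1 hconj z₀ hz₀
  have hDu : HasFDerivWithinAt u Du (closedBall (0:ℂ) 1) z₀ :=
    ((hu1.differentiableOn one_ne_zero) z₀ hz₀).hasFDerivWithinAt
  have hDv : HasFDerivWithinAt uConj Dv (closedBall (0:ℂ) 1) z₀ :=
    ((huConj1.differentiableOn one_ne_zero) z₀ hz₀).hasFDerivWithinAt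
  -- the complex-valued derivative of f within the closed ball
  have h1 : HasFDerivWithinAt (fun z => (u z : ℂ))
      (Complex.ofRealCLM.comp Du) (closedBall (0:ℂ) 1) z₀ :=
    Complex.ofRealCLM.hasFDerivAt.comp_hasFDerivWithinAt z₀ hDu
  have h2 : HasFDerivWithinAt (fun z => uConj z • Complex.I)
      (Dv.smulRight Complex.I) (closedBall (0:ℂ) 1) z₀ := hDv.smul_const Complex.I
  have hT : HasFDerivWithinAt f (Complex.ofRealCLM.comp Du + Dv.smulRight Complex.I)
      (closedBall (0:ℂ) 1) z₀ := by
    have := h1.add h2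
    apply this.congr'
    · intro w _
      rw [hf w]
      simp [Complex.real_smul]
    · exact hz₀
  have hc : HasDerivAt (fun t : ℝ => f (Complex.exp ((t:ℂ) * Complex.I)))
      ((Complex.ofRealCLM.comp Du + Dv.smulRight Complex.I) (z₀ * Complex.I)) θ := by
    have hcirc := hasDerivAt_circleMap θ
    rw [← hasDerivWithinAt_univ] at hcirc ⊢
    exact hT.comp_hasDerivWithinAt θ hcirc (fun t _ => exp_mem_cb t)
  convert hc using 1
  -- now compute the linear map applied to z₀ * I
  have hgen : ∀ w : ℂ, (Complex.ofRealCLM.comp Du + Dv.smulRight Complex.I) w = w * Fg u z₀ := by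
    intro w
    have hDuw := clm_basis Du w
    have hDvw := clm_basis Dv w
    simp only [ContinuousLinearMap.add_apply, ContinuousLinearMap.coe_comp', Function.comp_apply,
      ContinuousLinearMap.smulRight_apply, Complex.ofRealCLM_apply]
    rw [hDuw, hDvw, hCR.1, hCR.2]
    simp only [smul_eq_mul, Complex.real_smul]
    rw [Fg]
    rw [← hDudef]
    apply Complex.ext <;>
      simp [Complex.add_re, Complex.add_im, Complex.mul_re, Complex.mul_im] <;> ring_nf
  rw [hgen (z₀ * Complex.I)]
  ring

end CWH

/-- The multiplicity count of critical points of `u` equals `WN(f(∂B)) − 1`,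
where `f = u + i·uConj`. -/
theorem critSum_eq_winding_sub_one (u uConj : ℂ → ℝ) (f : ℂ → ℂ)
    (hu1 : ContDiffOn ℝ 1 u (closedBall (0:ℂ) 1))
    (hharm : HarmOn u (ball (0:ℂ) 1))
    (hgrad : ∀ z ∈ sphere (0:ℂ) 1, fderivWithin ℝ u (closedBall (0:ℂ) 1) z ≠ 0)
    (huConj1 : ContDiffOn ℝ 1 uConj (closedBall (0:ℂ) 1))
    (hconj : IsConjOn u uConj (ball (0:ℂ) 1))
    (hf : ∀ z, f z = (u z : ℂ) + (uConj z : ℂ) * Complex.I) :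
    ∀ (M : ℕ) (n : ℤ), CritSum u M →
      TangentWinding (fun θ : ℝ => f (Complex.exp ((θ : ℂ) * Complex.I))) n →
      (M : ℤ) = n - 1 := by
  classical
  intro M n hcrit htw
  obtain ⟨S, m, hS, hord, hsum⟩ := hcrit
  obtain ⟨aT, haTc, haT, haT2⟩ := htw
  -- basic membership facts
  have hSball : ∀ z ∈ S, z ∈ ball (0:ℂ) 1 := by
    intro z hz
    have hz' : z ∈ ({w | w ∈ ball (0:ℂ) 1 ∧ fderiv ℝ u w = 0} : Set ℂ) := by
      rw [← hS]; exact_mod_cast hz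
    exact hz'.1
  -- Fg agrees with gradC on the open ball
  have hFg_ball : ∀ z ∈ ball (0:ℂ) 1, CWH.Fg u z = gradC u z := by
    intro z hz
    rw [CWH.Fg, gradC, fderivWithin_of_mem_nhds (CWH.cb_mem_nhds hz)]
  -- gradC zero iff fderiv zero on ball
  have hgradC0 : ∀ z : ℂ, (gradC u z = 0 ↔ fderiv ℝ u z = 0) := by
    intro z
    constructor
    · intro h0
      rw [gradC] at h0
      rw [Complex.ext_iff] at h0
      simp only [Complex.sub_re, Complex.sub_im, Complex.ofReal_re, Complex.ofReal_im,
        Complex.mul_re, Complex.mul_im, Complex.I_re, Complex.I_im, Complex.zero_re,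
        Complex.zero_im] at h0
      have h1 : fderiv ℝ u z 1 = 0 := by linarith [h0.1]
      have h2 : fderiv ℝ u z Complex.I = 0 := by linarith [h0.2]
      apply ContinuousLinearMap.ext
      intro w
      rw [CWH.clm_basis (fderiv ℝ u z) w, h1, h2]
      simp
    · intro h0
      rw [gradC, h0]
      simp
  -- Fg is nonzero on the sphere
  have hFgs : ∀ z ∈ sphere (0:ℂ) 1, CWH.Fg u z ≠ 0 := by
    intro z hz h0
    apply hgrad z hz
    rw [CWH.Fg, Complex.ext_iff] at h0
    simp only [Complex.sub_re, Complex.sub_im, Complex.ofReal_re, Complex.ofReal_im,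
      Complex.mul_re, Complex.mul_im, Complex.I_re, Complex.I_im, Complex.zero_re,
      Complex.zero_im] at h0
    have h1 : fderivWithin ℝ u (closedBall (0:ℂ) 1) z 1 = 0 := by linarith [h0.1]
    have h2 : fderivWithin ℝ u (closedBall (0:ℂ) 1) z Complex.I = 0 := by linarith [h0.2]
    apply ContinuousLinearMap.ext
    intro w
    rw [CWH.clm_basis (fderivWithin ℝ u (closedBall (0:ℂ) 1) z) w, h1, h2]
    simp
  -- Fg is nonzero on the ball away from S
  have hFgb : ∀ z ∈ ball (0:ℂ) 1, z ∉ S → CWH.Fg u z ≠ 0 := by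
    intro z hz hns h0
    apply hns
    have : fderiv ℝ u z = 0 := (hgradC0 z).mp (by rw [← hFg_ball z hz]; exact h0)
    have : z ∈ ({w | w ∈ ball (0:ℂ) 1 ∧ fderiv ℝ u w = 0} : Set ℂ) := ⟨hz, this⟩
    rw [← hS] at this
    exact_mod_cast this
  -- choose local analytic factors
  choose g hg1 hg2 hg3 using hord
  -- the polynomial part and the nonvanishing part
  set p : ℂ → ℂ := fun w => ∏ z ∈ S, (w - z) ^ (m z) with hpdef
  set h : ℂ → ℂ := fun w =>
    if hw : w ∈ S then g w hw w / (∏ z ∈ S.erase w, (w - z) ^ (m z))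
    else CWH.Fg u w / p w with hhdef
  have hpcont : Continuous p := by
    apply continuous_finset_prod
    intro z _
    exact (continuous_id.sub continuous_const).pow _
  have hqne : ∀ z₀ ∈ S, (∏ z ∈ S.erase z₀, (z₀ - z) ^ (m z)) ≠ 0 := by
    intro z₀ hz₀
    apply Finset.prod_ne_zero_iff.mpr
    intro z hz
    apply pow_ne_zero
    rw [sub_ne_zero]
    exact fun hzz => (Finset.ne_of_mem_erase hz) (by rw [hzz])
  have hpne : ∀ w : ℂ, w ∉ S → p w ≠ 0 := by
    intro w hw
    apply Finset.prod_ne_zero_iff.mpr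
    intro z hz
    apply pow_ne_zero
    rw [sub_ne_zero]
    exact fun hzz => hw (by rw [hzz]; exact hz)
  have hsphere_notS : ∀ w ∈ sphere (0:ℂ) 1, w ∉ S := by
    intro w hw hmem
    have := hSball w hmem
    rw [mem_ball_zero_iff] at this
    rw [mem_sphere_zero_iff_norm] at hw
    rw [hw] at this
    exact lt_irrefl 1 this
  -- h is nonvanishing on the closed ball
  have hhne : ∀ w ∈ closedBall (0:ℂ) 1, h w ≠ 0 := by
    intro w hw
    by_cases hmem : w ∈ S
    · rw [hhdef]
      simp only [dif_pos hmem]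
      exact div_ne_zero (hg2 w hmem) (hqne w hmem)
    · rw [hhdef]
      simp only [dif_neg hmem]
      apply div_ne_zero _ (hpne w hmem)
      rcases lt_or_eq_of_le (mem_closedBall_zero_iff.mp hw) with hlt | heq
      · exact hFgb w (mem_ball_zero_iff.mpr hlt) hmem
      · exact hFgs w (mem_sphere_zero_iff_norm.mpr heq)
  -- h is continuous on the closed ball
  have hhcont : ContinuousOn h (closedBall (0:ℂ) 1) := by
    intro w₀ hw₀
    by_cases hmem : w₀ ∈ S
    · -- interior point of S : use the local factorization
      apply ContinuousAt.continuousWithinAt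
      have hφ : ContinuousAt (fun w => g w₀ hmem w / (∏ z ∈ S.erase w₀, (w - z) ^ (m z))) w₀ := by
        apply ContinuousAt.div
        · exact (hg1 w₀ hmem).continuousAt
        · exact (continuous_finset_prod _ (fun z _ =>
            (continuous_id.sub continuous_const).pow _)).continuousAt
        · exact hqne w₀ hmem
      apply hφ.congr
      -- h agrees with φ near w₀
      have hball : ball (0:ℂ) 1 ∈ nhds w₀ := isOpen_ball.mem_nhds (hSball w₀ hmem)
      have hSoff : ((S.erase w₀ : Finset ℂ) : Set ℂ)ᶜ ∈ nhds w₀ := by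
        apply IsOpen.mem_nhds (((S.erase w₀).finite_toSet.isClosed).isOpen_compl)
        simp
      filter_upwards [hg3 w₀ hmem, hball, hSoff] with w hw1 hw2 hw3
      by_cases hww : w = w₀
      · subst hww
        rw [hhdef]
        simp only [dif_pos hmem]
      · have hwS : w ∉ S := by
          intro hcon
          apply hw3
          simp only [Finset.coe_erase, Set.mem_diff, Set.mem_singleton_iff]
          exact ⟨hcon, hww⟩
        rw [hhdef]
        simp only [dif_neg hwS]
        rw [hFg_ball w hw2, hw1]
        show g w₀ hmem w / ∏ z ∈ S.erase w₀, (w - z) ^ m z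
            = (w - w₀) ^ m w₀ * g w₀ hmem w / ∏ z ∈ S, (w - z) ^ m z
        rw [← Finset.mul_prod_erase S _ hmem]
        rw [mul_div_mul_left _ _ (pow_ne_zero _ (sub_ne_zero.mpr hww))]
    · -- point away from S
      have hψ : ContinuousWithinAt (fun w => CWH.Fg u w / p w) (closedBall (0:ℂ) 1) w₀ := by
        apply ContinuousWithinAt.div
        · exact (CWH.Fg_continuousOn hu1) w₀ hw₀
        · exact hpcont.continuousWithinAt
        · exact hpne w₀ hmem
      apply hψ.congr_of_eventuallyEq
      · have hSoff : ((S : Finset ℂ) : Set ℂ)ᶜ ∈ nhds w₀ := by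
          apply IsOpen.mem_nhds ((S.finite_toSet.isClosed).isOpen_compl)
          simpa using hmem
        filter_upwards [mem_nhdsWithin_of_mem_nhds hSoff] with w hw
        rw [hhdef]
        simp only [dif_neg (by simpa using hw : w ∉ S)]
      · rw [hhdef]; simp only [dif_neg hmem]
  -- the factorization on the sphere
  have hfac : ∀ w ∈ sphere (0:ℂ) 1, CWH.Fg u w = p w * h w := by
    intro w hw
    have hwS := hsphere_notS w hw
    rw [hhdef]
    simp only [dif_neg hwS]
    rw [mul_comm, div_mul_cancel₀ _ (hpne w hwS)]
  -- continuous logarithm of h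
  obtain ⟨LL, hLLcont, hLLexp⟩ := CWH.exists_log hhcont hhne
  -- the lift of h along the circle
  have hah : CWH.IsLift (fun θ => h (Complex.exp ((θ:ℝ) * Complex.I : ℂ)))
      (fun θ => (LL (Complex.exp ((θ:ℂ) * Complex.I))).im) := by
    constructor
    · apply Complex.continuous_im.comp
      apply hLLcont.comp_continuous
      · exact (Complex.continuous_ofReal.mul continuous_const).cexp
      · exact fun t => CWH.exp_mem_cb t
    · intro θ
      have hz := CWH.exp_mem_cb θ
      set z := Complex.exp ((θ:ℂ) * Complex.I)
      have he := hLLexp z hz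
      have h1 : h z = Complex.exp ((LL z).re : ℂ) * Complex.exp ((LL z).im * Complex.I) := by
        rw [← he, ← Complex.exp_add, Complex.re_add_im]
      have h2 : (‖h z‖ : ℂ) = Complex.exp ((LL z).re : ℂ) := by
        rw [← he, Complex.norm_exp, Complex.ofReal_exp]
      rw [h2]
      exact h1
  -- the lift of p along the circle
  have hap : CWH.IsLift (fun θ => p (Complex.exp ((θ:ℝ) * Complex.I : ℂ)))
      (fun θ => ∑ z ∈ S, (m z : ℝ) * (θ + Complex.arg (1 - z * Complex.exp (-((θ:ℂ) * Complex.I))))) := by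
    have := CWH.IsLift.prod S
      (fun z θ => (Complex.exp ((θ:ℂ) * Complex.I) - z) ^ (m z))
      (fun z θ => (m z : ℝ) * (θ + Complex.arg (1 - z * Complex.exp (-((θ:ℂ) * Complex.I)))))
      (fun z hz => by
        have hz' := hSball z hz
        rw [mem_ball_zero_iff] at hz'
        exact (CWH.lift_linear (by exact hz')).pow (m z))
    exact this
  -- combined: lift of Fg along the circle
  have haF : CWH.IsLift (fun θ => CWH.Fg u (Complex.exp ((θ:ℝ) * Complex.I : ℂ)))
      (fun θ => (∑ z ∈ S, (m z : ℝ) * (θ + Complex.arg (1 - z * Complex.exp (-((θ:ℂ) * Complex.I)))))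
        + (LL (Complex.exp ((θ:ℂ) * Complex.I))).im) := by
    have := hap.mul hah
    refine ⟨this.1, fun θ => ?_⟩
    beta_reduce
    have heq : ∀ t : ℝ, CWH.Fg u (Complex.exp ((t:ℂ) * Complex.I)) =
        p (Complex.exp ((t:ℂ) * Complex.I)) * h (Complex.exp ((t:ℂ) * Complex.I)) :=
      fun t => hfac _ (CWH.exp_mem_sphere t)
    rw [heq θ]
    have h2 := this.2 θ
    beta_reduce at h2
    exact h2
  -- lift of Fg from the tangent winding
  have hnz : ∀ θ : ℝ, CWH.Fg u (Complex.exp ((θ:ℂ) * Complex.I)) ≠ 0 :=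
    fun θ => hFgs _ (CWH.exp_mem_sphere θ)
  have hbT : CWH.IsLift (fun θ => CWH.Fg u (Complex.exp ((θ:ℝ) * Complex.I : ℂ)))
      (fun θ => aT θ - θ - Real.pi / 2) := by
    constructor
    · exact (haTc.sub continuous_id).sub continuous_const
    · intro θ
      beta_reduce
      set z₀ := Complex.exp ((θ:ℂ) * Complex.I) with hz₀def
      have hD := (CWH.tangent_deriv hu1 huConj1 hconj hf θ).deriv
      have haTθ := haT θ
      rw [hD] at haTθ
      have habs : ‖Complex.I * z₀ * CWH.Fg u z₀‖ = ‖CWH.Fg u z₀‖ := by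
        rw [norm_mul, norm_mul, Complex.norm_I, hz₀def, Complex.norm_exp_ofReal_mul_I]
        ring
      rw [habs] at haTθ
      have hIz : (Complex.I * z₀) ≠ 0 := mul_ne_zero Complex.I_ne_zero (Complex.exp_ne_zero _)
      have hexp : Complex.I * z₀ * Complex.exp ((↑(aT θ - θ - Real.pi/2) : ℂ) * Complex.I)
          = Complex.exp ((aT θ : ℂ) * Complex.I) := by
        rw [hz₀def]
        push_cast
        rw [sub_mul, sub_mul, Complex.exp_sub, Complex.exp_sub]
        have hpi2 : Complex.exp ((Real.pi : ℂ) / 2 * Complex.I) = Complex.I := by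
          rw [Complex.exp_mul_I]
          have hc : Complex.cos ((Real.pi : ℂ) / 2) = 0 := by
            rw [show ((Real.pi : ℂ) / 2) = ((Real.pi / 2 : ℝ) : ℂ) by push_cast; ring]
            rw [← Complex.ofReal_cos, Real.cos_pi_div_two, Complex.ofReal_zero]
          have hs : Complex.sin ((Real.pi : ℂ) / 2) = 1 := by
            rw [show ((Real.pi : ℂ) / 2) = ((Real.pi / 2 : ℝ) : ℂ) by push_cast; ring]
            rw [← Complex.ofReal_sin, Real.sin_pi_div_two, Complex.ofReal_one]
          rw [hc, hs, one_mul, zero_add]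
        rw [hpi2]
        field_simp
      apply mul_left_cancel₀ hIz
      calc Complex.I * z₀ * CWH.Fg u z₀
          = (‖CWH.Fg u z₀‖ : ℂ) * Complex.exp ((aT θ : ℂ) * Complex.I) := haTθ
        _ = (‖CWH.Fg u z₀‖ : ℂ) *
            (Complex.I * z₀ * Complex.exp ((↑(aT θ - θ - Real.pi/2) : ℂ) * Complex.I)) := by
            rw [hexp]
        _ = Complex.I * z₀ * ((‖CWH.Fg u z₀‖ : ℂ) *
            Complex.exp ((↑(aT θ - θ - Real.pi/2) : ℂ) * Complex.I)) := by ring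
  -- uniqueness of lifts : compare endpoints
  have huniq := CWH.lift_unique hbT haF hnz (2 * Real.pi)
  beta_reduce at huniq
  have hexp2π : Complex.exp (((2*Real.pi : ℝ) : ℂ) * Complex.I) = 1 := by
    push_cast; exact Complex.exp_two_pi_mul_I
  have hnexp2π : Complex.exp (-(((2*Real.pi : ℝ) : ℂ) * Complex.I)) = 1 := by
    rw [Complex.exp_neg, hexp2π, inv_one]
  simp only [hexp2π, hnexp2π, Complex.ofReal_zero, zero_mul, neg_zero, Complex.exp_zero]
    at huniq
  have hM : (∑ z ∈ S, (m z : ℝ)) = (M : ℝ) := by exact_mod_cast hsum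
  have hsum2 : (∑ z ∈ S, (m z:ℝ) * (2*Real.pi + Complex.arg (1 - z * 1)))
      = (∑ z ∈ S, (m z:ℝ) * ((0:ℝ) + Complex.arg (1 - z * 1))) + 2*Real.pi * (M:ℝ) := by
    have hterm : ∀ z ∈ S, (m z:ℝ) * (2*Real.pi + Complex.arg (1 - z * 1))
        = (m z:ℝ) * ((0:ℝ) + Complex.arg (1 - z * 1)) + (m z:ℝ) * (2*Real.pi) := by
      intro z _; ring
    rw [Finset.sum_congr rfl hterm, Finset.sum_add_distrib, ← Finset.sum_mul, hM]
    ring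
  rw [hsum2] at huniq
  have haT2' := haT2
  have hfinal : ((n:ℝ) - 1 - (M:ℝ)) * (2*Real.pi) = 0 := by
    rw [haT2'] at huniq
    push_cast at huniq ⊢
    nlinarith [huniq]
  have h2πne : (2*Real.pi) ≠ 0 := by positivity
  have : (n:ℝ) - 1 - (M:ℝ) = 0 := by
    rcases mul_eq_zero.mp hfinal with h | h
    · exact h
    · exact absurd h h2πne
  have : (M:ℝ) = (n:ℝ) - 1 := by linarith
  exact_mod_cast this
end

section
/- Let Φ = (φ,ψ) : [a,b] → ℝ² be a C¹ curve with φ' ≠ 0 on (a,b) and φ'(a) = φ'(b) = 0, and let g : ψ([a,b]) → ℝ be C¹ with g' > 0 on ψ((a,b)). Define Φ̃ = (φ, g∘ψ). Then the total variation of the argument of the tangent along the two curves coincide: ∫_a^b d arg(Φ̃') = ∫_a^b d arg(Φ'). -/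
open Complex Metric Set MeasureTheory Filter

lemma core_aux (a b : ℝ) (hab : a < b) (γ : ℝ → ℝ)
    (hγ : ContinuousOn γ (Icc a b))
    (hcos : ∀ t ∈ Ioo a b, 0 < Real.cos (γ t))
    (hca : Real.cos (γ a) = 0) (hcb : Real.cos (γ b) = 0) :
    γ b - γ a = (Real.sin (γ b) - Real.sin (γ a)) * (Real.pi/2) := by
  have hπ := Real.pi_pos
  set t0 := (a+b)/2 with ht0def
  have ht0 : t0 ∈ Ioo a b := ⟨by simp [ht0def]; linarith, by simp [ht0def]; linarith⟩
  set k : ℤ := round (γ t0 / (2*Real.pi)) with hk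
  set c : ℝ := (k:ℝ) * (2*Real.pi) with hc
  set δ : ℝ → ℝ := fun t => γ t - c with hδ
  have hcosδ : ∀ t, Real.cos (δ t) = Real.cos (γ t) := fun t =>
    Real.cos_sub_int_mul_two_pi (γ t) k
  have hsinδ : ∀ t, Real.sin (δ t) = Real.sin (γ t) := fun t => by
    exact Real.sin_sub_int_mul_two_pi (γ t) k
  have h2π : (0:ℝ) < 2*Real.pi := by linarith
  have h0 : |δ t0| ≤ Real.pi := by
    have h1 := abs_sub_round (γ t0 / (2*Real.pi))
    have h2' : δ t0 = (γ t0 / (2*Real.pi) - k) * (2*Real.pi) := by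
      simp only [hδ, hc]
      field_simp
    have h2 : |δ t0| = |γ t0 / (2*Real.pi) - k| * (2*Real.pi) := by
      rw [h2', abs_mul, _root_.abs_of_pos h2π]
    rw [h2]
    calc |γ t0 / (2*Real.pi) - k| * (2*Real.pi) ≤ (1/2) * (2*Real.pi) := by
          apply mul_le_mul_of_nonneg_right h1 h2π.le
      _ = Real.pi := by ring
  -- generic: |δ| ≤ π and cos (δ) > 0 implies |δ| < π/2
  have key : ∀ x : ℝ, |x| ≤ Real.pi → 0 < Real.cos x → |x| < Real.pi/2 := by
    intro x hx hcx
    by_contra h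
    push_neg at h
    rcases le_or_gt 0 x with hx0 | hx0
    · rw [_root_.abs_of_nonneg hx0] at hx h
      exact absurd (Real.cos_nonpos_of_pi_div_two_le_of_le h (by linarith)) (by linarith)
    · rw [_root_.abs_of_neg hx0] at hx h
      have := Real.cos_nonpos_of_pi_div_two_le_of_le h (by linarith)
      rw [Real.cos_neg] at this
      linarith
  have hmid : |δ t0| < Real.pi/2 := key _ h0 (by rw [hcosδ]; exact hcos _ ht0)
  have main : ∀ t ∈ Ioo a b, |δ t| < Real.pi/2 := by
    intro t ht
    have hct : 0 < Real.cos (δ t) := by rw [hcosδ]; exact hcos _ ht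
    by_contra h
    push_neg at h
    have hδc : ContinuousOn δ (uIcc t0 t) := by
      apply (hγ.sub continuousOn_const).mono
      exact ((Set.ordConnected_Ioo).uIcc_subset ht0 ht).trans Ioo_subset_Icc_self
    have hIVT := intermediate_value_uIcc hδc
    rcases le_or_gt (δ t) 0 with h1 | h1
    · -- δ t ≤ -(π/2), since |δ t| ≥ π/2
      have hlt : δ t ≤ -(Real.pi/2) := by
        rw [abs_of_nonpos h1] at h; linarith
      have hmem : -(Real.pi/2) ∈ uIcc (δ t0) (δ t) := by
        rw [Set.mem_uIcc]
        right
        exact ⟨hlt, by cases abs_lt.mp hmid; linarith⟩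
      obtain ⟨t', ht', hval⟩ := hIVT hmem
      have ht'I : t' ∈ Ioo a b := (Set.ordConnected_Ioo).uIcc_subset ht0 ht ht'
      have : Real.cos (δ t') = 0 := by rw [hval]; simp
      rw [hcosδ] at this
      exact absurd this (ne_of_gt (hcos _ ht'I))
    · have hlt : Real.pi/2 ≤ δ t := by
        rw [abs_of_pos h1] at h; linarith
      have hmem : Real.pi/2 ∈ uIcc (δ t0) (δ t) := by
        rw [Set.mem_uIcc]
        left
        exact ⟨by cases abs_lt.mp hmid; linarith, hlt⟩
      obtain ⟨t', ht', hval⟩ := hIVT hmem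
      have ht'I : t' ∈ Ioo a b := (Set.ordConnected_Ioo).uIcc_subset ht0 ht ht'
      have : Real.cos (δ t') = 0 := by rw [hval]; simp
      rw [hcosδ] at this
      exact absurd this (ne_of_gt (hcos _ ht'I))
  -- endpoints
  have hend : ∀ x ∈ Icc a b, x ∈ closure (Ioo a b) → Real.cos (γ x) = 0 →
      δ x = Real.sin (γ x) * (Real.pi/2) := by
    intro x hx hxcl hcx
    have hne : (nhdsWithin x (Ioo a b)).NeBot := mem_closure_iff_nhdsWithin_neBot.mp hxcl
    have htd : Tendsto (fun t => |δ t|) (nhdsWithin x (Ioo a b)) (nhds (|δ x|)) := by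
      apply Tendsto.abs
      exact ((hγ.sub continuousOn_const).continuousWithinAt hx).mono Ioo_subset_Icc_self
    have hle : |δ x| ≤ Real.pi/2 := by
      apply le_of_tendsto htd
      filter_upwards [self_mem_nhdsWithin] with t ht
      exact (main t ht).le
    have hcδ : Real.cos (δ x) = 0 := by rw [hcosδ]; exact hcx
    have habs : |δ x| = Real.pi/2 := by
      rcases lt_or_eq_of_le hle with h | h
      · exfalso
        have : 0 < Real.cos (δ x) := Real.cos_pos_of_mem_Ioo (abs_lt.mp h |>.imp id id |> fun h => ⟨h.1, h.2⟩)
        linarith [this, hcδ.le]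
      · exact h
    rw [← hsinδ]
    rcases abs_eq (by linarith : (0:ℝ) ≤ Real.pi/2) |>.mp habs with h | h
    · rw [h, Real.sin_pi_div_two]; ring
    · rw [h]; simp [Real.sin_pi_div_two]
  have hcla : a ∈ closure (Ioo a b) := by rw [closure_Ioo hab.ne]; exact ⟨le_refl a, hab.le⟩
  have hclb : b ∈ closure (Ioo a b) := by rw [closure_Ioo hab.ne]; exact ⟨hab.le, le_refl b⟩
  have ha' := hend a ⟨le_refl a, hab.le⟩ hcla hca
  have hb' := hend b ⟨hab.le, le_refl b⟩ hclb hcb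
  have : γ b - γ a = δ b - δ a := by simp [hδ]
  rw [this, ha', hb']
  ring


lemma sin_eq_aux (a b x : ℝ) (hx : x ∈ Icc a b)
    (hcl : x ∈ closure (Ioo a b))
    (α β : ℝ → ℝ) (F G : ℝ → ℂ) (k : ℝ → ℝ)
    (hFc : ContinuousOn (fun t => (F t).im) (Icc a b))
    (hβc : ContinuousOn β (Icc a b))
    (hFim : ∀ t ∈ Icc a b, (F t).im = ‖F t‖ * Real.sin (α t))
    (hGim : ∀ t ∈ Icc a b, (G t).im = ‖G t‖ * Real.sin (β t))
    (hFx : 0 < ‖F x‖) (hGpos : ∀ t ∈ Icc a b, 0 < ‖G t‖)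
    (hk : ∀ t ∈ Ioo a b, 0 < k t)
    (hrel : ∀ t ∈ Ioo a b, (G t).im = k t * (F t).im)
    (hcosa : Real.cos (α x) = 0) (hcosb : Real.cos (β x) = 0) :
    Real.sin (β x) = Real.sin (α x) := by
  set εa := Real.sin (α x) with hεa
  have hsq : εa ^ 2 = 1 := by
    have := Real.sin_sq_add_cos_sq (α x)
    rw [hcosa] at this; nlinarith
  have hsqβ : Real.sin (β x) ^ 2 = 1 := by
    have := Real.sin_sq_add_cos_sq (β x)
    rw [hcosb] at this; nlinarith
  have hFpos : 0 < (F x).im * εa := by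
    rw [hFim x hx, hεa]
    nlinarith
  have hne : (nhdsWithin x (Ioo a b)).NeBot := mem_closure_iff_nhdsWithin_neBot.mp hcl
  have htF : Tendsto (fun t => (F t).im * εa) (nhdsWithin x (Ioo a b)) (nhds ((F x).im * εa)) :=
    ((hFc.continuousWithinAt hx).mono Ioo_subset_Icc_self).mul tendsto_const_nhds
  have hev : ∀ᶠ t in nhdsWithin x (Ioo a b), 0 < (F t).im * εa :=
    htF.eventually (eventually_gt_nhds hFpos)
  have hev2 : ∀ᶠ t in nhdsWithin x (Ioo a b), 0 ≤ Real.sin (β t) * εa := by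
    filter_upwards [hev, self_mem_nhdsWithin] with t ht htI
    have htIcc : t ∈ Icc a b := Ioo_subset_Icc_self htI
    have hG : (G t).im * εa = k t * ((F t).im * εa) := by rw [hrel t htI]; ring
    have hGpos' : 0 < (G t).im * εa := by rw [hG]; exact mul_pos (hk t htI) ht
    have hs : Real.sin (β t) * εa = ((G t).im * εa) / ‖G t‖ := by
      rw [hGim t htIcc, eq_div_iff (hGpos t htIcc).ne']
      ring
    rw [hs]
    positivity
  have htβ : Tendsto (fun t => Real.sin (β t) * εa) (nhdsWithin x (Ioo a b))
      (nhds (Real.sin (β x) * εa)) := by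
    apply Tendsto.mul _ tendsto_const_nhds
    exact (Real.continuous_sin.continuousAt.comp_continuousWithinAt
      ((hβc.continuousWithinAt hx).mono Ioo_subset_Icc_self))
  have hge : 0 ≤ Real.sin (β x) * εa := ge_of_tendsto htβ hev2
  have hprod : Real.sin (β x) * εa = 1 := by nlinarith [hge, hsq, hsqβ]
  nlinarith [hprod, hsq]

/-- Shearing the second component of an arc with vertical tangents at the endpoints
does not change the total variation of the argument of the tangent. -/
theorem arc_argument_invariance (a b : ℝ) (hab : a < b)
    (Φ Φ' : ℝ → ℂ) (g g' : ℝ → ℝ) (Ψ' : ℝ → ℂ)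
    (hΦ : ∀ t ∈ Icc a b, HasDerivWithinAt Φ (Φ' t) (Icc a b) t)
    (hΦ'c : ContinuousOn Φ' (Icc a b))
    (hφ : ∀ t ∈ Ioo a b, (Φ' t).re ≠ 0)
    (hpa : (Φ' a).re = 0) (hpb : (Φ' b).re = 0)
    (hT : ∀ t ∈ Icc a b, Φ' t ≠ 0)
    (hg : ∀ y ∈ (fun t => (Φ t).im) '' Icc a b,
      HasDerivWithinAt g (g' y) ((fun t => (Φ t).im) '' Icc a b) y)
    (hg' : ∀ t ∈ Ioo a b, 0 < g' ((Φ t).im))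
    (hΨ' : ∀ t, Ψ' t = ((Φ' t).re : ℂ) + ((g' ((Φ t).im) * (Φ' t).im : ℝ) : ℂ) * Complex.I)
    (hT2 : ∀ t ∈ Icc a b, Ψ' t ≠ 0)
    (α β : ℝ → ℝ) (hαc : ContinuousOn α (Icc a b)) (hβc : ContinuousOn β (Icc a b))
    (hα : ∀ t ∈ Icc a b, Φ' t = (‖Φ' t‖ : ℂ) * Complex.exp ((α t : ℂ) * Complex.I))
    (hβ : ∀ t ∈ Icc a b, Ψ' t = (‖Ψ' t‖ : ℂ) * Complex.exp ((β t : ℂ) * Complex.I)) :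
    β b - β a = α b - α a := by
  have hπ := Real.pi_pos
  have ha : a ∈ Icc a b := ⟨le_refl a, hab.le⟩
  have hb : b ∈ Icc a b := ⟨hab.le, le_refl b⟩
  have hApos : ∀ t ∈ Icc a b, 0 < ‖Φ' t‖ := fun t ht =>
    norm_pos_iff.mpr (hT t ht)
  have hBpos : ∀ t ∈ Icc a b, 0 < ‖Ψ' t‖ := fun t ht =>
    norm_pos_iff.mpr (hT2 t ht)
  have hre : ∀ t ∈ Icc a b, (Φ' t).re = ‖Φ' t‖ * Real.cos (α t) := by
    intro t ht
    conv_lhs => rw [hα t ht]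
    simp [Complex.exp_mul_I, Complex.ext_iff, Complex.cos_ofReal_re, Complex.sin_ofReal_re]
  have him : ∀ t ∈ Icc a b, (Φ' t).im = ‖Φ' t‖ * Real.sin (α t) := by
    intro t ht
    conv_lhs => rw [hα t ht]
    simp [Complex.exp_mul_I, Complex.ext_iff, Complex.cos_ofReal_re, Complex.sin_ofReal_re]
  have hreβ : ∀ t ∈ Icc a b, (Ψ' t).re = ‖Ψ' t‖ * Real.cos (β t) := by
    intro t ht
    conv_lhs => rw [hβ t ht]
    simp [Complex.exp_mul_I, Complex.ext_iff, Complex.cos_ofReal_re, Complex.sin_ofReal_re]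
  have himβ : ∀ t ∈ Icc a b, (Ψ' t).im = ‖Ψ' t‖ * Real.sin (β t) := by
    intro t ht
    conv_lhs => rw [hβ t ht]
    simp [Complex.exp_mul_I, Complex.ext_iff, Complex.cos_ofReal_re, Complex.sin_ofReal_re]
  have hreΨ : ∀ t, (Ψ' t).re = (Φ' t).re := fun t => by rw [hΨ']; simp
  have himΨ : ∀ t, (Ψ' t).im = g' ((Φ t).im) * (Φ' t).im := fun t => by rw [hΨ']; simp
  -- endpoint cosines vanish
  have hcosαa : Real.cos (α a) = 0 := by
    have := hre a ha; rw [hpa] at this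
    have hA := hApos a ha
    nlinarith [this, hA]
  have hcosαb : Real.cos (α b) = 0 := by
    have := hre b hb; rw [hpb] at this
    have hA := hApos b hb
    nlinarith [this, hA]
  have hcosβa : Real.cos (β a) = 0 := by
    have h1 := hreβ a ha; rw [hreΨ, hpa] at h1
    have hB := hBpos a ha
    nlinarith [h1, hB]
  have hcosβb : Real.cos (β b) = 0 := by
    have h1 := hreβ b hb; rw [hreΨ, hpb] at h1
    have hB := hBpos b hb
    nlinarith [h1, hB]
  -- sign constancy of the real part on Ioo
  have hrec : ContinuousOn (fun t => (Φ' t).re) (Icc a b) :=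
    Complex.continuous_re.comp_continuousOn hΦ'c
  set t0 := (a+b)/2 with ht0def
  have ht0 : t0 ∈ Ioo a b := ⟨by simp [ht0def]; linarith, by simp [ht0def]; linarith⟩
  have hsign : (∀ t ∈ Ioo a b, 0 < (Φ' t).re) ∨ (∀ t ∈ Ioo a b, (Φ' t).re < 0) := by
    have hIVT : ∀ t ∈ Ioo a b, ∀ t' ∈ Ioo a b, (Φ' t).re < 0 → 0 < (Φ' t').re → False := by
      intro t ht t' ht' h1 h2
      have hc : ContinuousOn (fun s => (Φ' s).re) (uIcc t t') :=
        hrec.mono (((Set.ordConnected_Ioo).uIcc_subset ht ht').trans Ioo_subset_Icc_self)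
      have hmem : (0:ℝ) ∈ uIcc ((Φ' t).re) ((Φ' t').re) := by
        rw [Set.mem_uIcc]; left; exact ⟨h1.le, h2.le⟩
      obtain ⟨s, hs, hval⟩ := intermediate_value_uIcc hc hmem
      exact hφ s ((Set.ordConnected_Ioo).uIcc_subset ht ht' hs) (by simpa using hval)
    rcases lt_or_gt_of_ne (hφ t0 ht0) with h | h
    · right; intro t ht
      rcases lt_or_gt_of_ne (hφ t ht) with h' | h'
      · exact h'
      · exact absurd (hIVT t0 ht0 t ht h h') (fun q => q)
    · left; intro t ht
      rcases lt_or_gt_of_ne (hφ t ht) with h' | h'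
      · exact absurd (hIVT t ht t0 ht0 h' h) (fun q => q)
      · exact h'
  -- sin equalities at endpoints
  have hFc : ContinuousOn (fun t => (Φ' t).im) (Icc a b) :=
    Complex.continuous_im.comp_continuousOn hΦ'c
  have hcla : a ∈ closure (Ioo a b) := by rw [closure_Ioo hab.ne]; exact ha
  have hclb : b ∈ closure (Ioo a b) := by rw [closure_Ioo hab.ne]; exact hb
  have hsa : Real.sin (β a) = Real.sin (α a) :=
    sin_eq_aux a b a ha hcla α β Φ' Ψ' (fun t => g' ((Φ t).im)) hFc hβc him himβ
      (hApos a ha) hBpos hg' (fun t _ => himΨ t) hcosαa hcosβa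
  have hsb : Real.sin (β b) = Real.sin (α b) :=
    sin_eq_aux a b b hb hclb α β Φ' Ψ' (fun t => g' ((Φ t).im)) hFc hβc him himβ
      (hApos b hb) hBpos hg' (fun t _ => himΨ t) hcosαb hcosβb
  rcases hsign with hs | hs
  · have hcosα : ∀ t ∈ Ioo a b, 0 < Real.cos (α t) := by
      intro t ht
      have h1 := hs t ht
      rw [hre t (Ioo_subset_Icc_self ht)] at h1
      by_contra hcon; push_neg at hcon
      nlinarith [hApos t (Ioo_subset_Icc_self ht)]
    have hcosβ : ∀ t ∈ Ioo a b, 0 < Real.cos (β t) := by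
      intro t ht
      have h1 := hs t ht
      rw [← hreΨ, hreβ t (Ioo_subset_Icc_self ht)] at h1
      by_contra hcon; push_neg at hcon
      nlinarith [hBpos t (Ioo_subset_Icc_self ht)]
    have e1 := core_aux a b hab α hαc hcosα hcosαa hcosαb
    have e2 := core_aux a b hab β hβc hcosβ hcosβa hcosβb
    rw [e1, e2, hsa, hsb]
  · have hcosα : ∀ t ∈ Ioo a b, 0 < Real.cos (α t + Real.pi) := by
      intro t ht
      have h1 := hs t ht
      rw [hre t (Ioo_subset_Icc_self ht)] at h1
      rw [Real.cos_add_pi]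
      by_contra hcon; push_neg at hcon
      nlinarith [hApos t (Ioo_subset_Icc_self ht)]
    have hcosβ : ∀ t ∈ Ioo a b, 0 < Real.cos (β t + Real.pi) := by
      intro t ht
      have h1 := hs t ht
      rw [← hreΨ, hreβ t (Ioo_subset_Icc_self ht)] at h1
      rw [Real.cos_add_pi]
      by_contra hcon; push_neg at hcon
      nlinarith [hBpos t (Ioo_subset_Icc_self ht)]
    have e1 := core_aux a b hab (fun t => α t + Real.pi)
      (hαc.add continuousOn_const) hcosα
      (by simp [Real.cos_add_pi, hcosαa]) (by simp [Real.cos_add_pi, hcosαb])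
    have e2 := core_aux a b hab (fun t => β t + Real.pi)
      (hβc.add continuousOn_const) hcosβ
      (by simp [Real.cos_add_pi, hcosβa]) (by simp [Real.cos_add_pi, hcosβb])
    simp only [Real.sin_add_pi] at e1 e2
    have e1' : α b - α a = (Real.sin (α a) - Real.sin (α b)) * (Real.pi/2) := by linarith [e1]
    have e2' : β b - β a = (Real.sin (β a) - Real.sin (β b)) * (Real.pi/2) := by linarith [e2]
    rw [e1', e2', hsa, hsb]
end

section
/- Let Φ : ∂B → γ be a homeomorphism onto a simple closed curve γ bounding a Jordan domain D, and let U be the (continuous up to the boundary) harmonic extension of Φ to the unit disk. If U is a local homeomorphism at every point P ∈ ∂B (i.e., injective on G ∩ closure(B) for some neighborhood G of P), then there exists ρ ∈ (0,1) such that U is injective on the annulus closure(B) \ B_ρ(0). -/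
open Complex Metric Set MeasureTheory Filter

/-- If `U` is a local homeomorphism at every boundary point, then it is injective
on some annulus near the boundary. -/
theorem injective_on_annulus (Φ U : ℂ → ℂ) (D : Set ℂ)
    (hD : IsOpen D) (hDb : Bornology.IsBounded D) (hDconn : IsConnected D)
    (hΦc : ContinuousOn Φ (sphere (0:ℂ) 1))
    (hΦbij : Set.BijOn Φ (sphere (0:ℂ) 1) (frontier D))
    (hUc : ContinuousOn U (closedBall (0:ℂ) 1))
    (hharm : HarmMapOn U (ball (0:ℂ) 1))
    (hbd : Set.EqOn U Φ (sphere (0:ℂ) 1))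
    (hloc : ∀ P ∈ sphere (0:ℂ) 1, LocalHomeoAt U P) :
    ∃ ρ : ℝ, 0 < ρ ∧ ρ < 1 ∧ Set.InjOn U (closedBall (0:ℂ) 1 \ ball (0:ℂ) ρ) := by
  by_contra hcon
  push_neg at hcon
  have key : ∀ n : ℕ, ∃ p : ℂ × ℂ,
      p.1 ∈ closedBall (0:ℂ) 1 ∧ p.2 ∈ closedBall (0:ℂ) 1 ∧
      1 - 1/((n:ℝ)+2) ≤ ‖p.1‖ ∧ 1 - 1/((n:ℝ)+2) ≤ ‖p.2‖ ∧
      U p.1 = U p.2 ∧ p.1 ≠ p.2 := by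
    intro n
    have h2 : (0:ℝ) < (n:ℝ) + 2 := by positivity
    have hρ0 : 0 < 1 - 1/((n:ℝ)+2) := by
      rw [sub_pos, div_lt_one h2]; linarith
    have hρ1 : 1 - 1/((n:ℝ)+2) < 1 := by
      have : (0:ℝ) < 1/((n:ℝ)+2) := by positivity
      linarith
    have h := hcon _ hρ0 hρ1
    rw [Set.InjOn] at h
    push_neg at h
    obtain ⟨x, hx, y, hy, hxy, hne⟩ := h
    refine ⟨(x, y), hx.1, hy.1, ?_, ?_, hxy, hne⟩
    · have := hx.2
      simp only [mem_ball, dist_zero_right, not_lt] at this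
      linarith
    · have := hy.2
      simp only [mem_ball, dist_zero_right, not_lt] at this
      linarith
  choose p hp1 hp2 hp3 hp4 hp5 hp6 using key
  have hcomp : IsCompact (closedBall (0:ℂ) 1 ×ˢ closedBall (0:ℂ) 1) :=
    (isCompact_closedBall _ _).prod (isCompact_closedBall _ _)
  obtain ⟨q, hq, φ, hφ, hlim⟩ := hcomp.tendsto_subseq (x := p) (fun n => ⟨hp1 n, hp2 n⟩)
  have hq1 : q.1 ∈ closedBall (0:ℂ) 1 := hq.1
  have hq2 : q.2 ∈ closedBall (0:ℂ) 1 := hq.2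
  have hlim1 : Tendsto (fun n => (p (φ n)).1) atTop (nhds q.1) :=
    (continuous_fst.tendsto q).comp hlim
  have hlim2 : Tendsto (fun n => (p (φ n)).2) atTop (nhds q.2) :=
    (continuous_snd.tendsto q).comp hlim
  have hρlim : Tendsto (fun n : ℕ => 1 - 1/(((φ n):ℝ)+2)) atTop (nhds 1) := by
    have h1 : Tendsto (fun n : ℕ => ((φ n : ℕ):ℝ) + 2) atTop atTop :=
      (tendsto_natCast_atTop_atTop.comp hφ.tendsto_atTop).atTop_add tendsto_const_nhds
    have h2 : Tendsto (fun n : ℕ => 1/(((φ n):ℝ)+2)) atTop (nhds 0) := by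
      simpa [one_div] using (show Tendsto (fun n : ℕ => (((φ n):ℝ)+2)⁻¹) atTop (nhds 0) from h1.inv_tendsto_atTop)
    simpa using (tendsto_const_nhds (x := (1:ℝ)) (f := atTop)).sub h2
  have hnorm1 : ‖q.1‖ = 1 := by
    have hle : ‖q.1‖ ≤ 1 := by simpa [mem_closedBall, dist_zero_right] using hq1
    have hge : 1 ≤ ‖q.1‖ :=
      le_of_tendsto_of_tendsto' hρlim hlim1.norm (fun n => hp3 (φ n))
    linarith
  have hnorm2 : ‖q.2‖ = 1 := by
    have hle : ‖q.2‖ ≤ 1 := by simpa [mem_closedBall, dist_zero_right] using hq2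
    have hge : 1 ≤ ‖q.2‖ :=
      le_of_tendsto_of_tendsto' hρlim hlim2.norm (fun n => hp4 (φ n))
    linarith
  have hs1 : q.1 ∈ sphere (0:ℂ) 1 := by simpa [mem_sphere_iff_norm] using hnorm1
  have hs2 : q.2 ∈ sphere (0:ℂ) 1 := by simpa [mem_sphere_iff_norm] using hnorm2
  -- U q.1 = U q.2
  have hUlim1 : Tendsto (fun n => U (p (φ n)).1) atTop (nhds (U q.1)) :=
    (hUc q.1 hq1).tendsto.comp
      (tendsto_nhdsWithin_of_tendsto_nhds_of_eventually_within _ hlim1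
        (Filter.Eventually.of_forall fun n => hp1 (φ n)))
  have hUlim2 : Tendsto (fun n => U (p (φ n)).2) atTop (nhds (U q.2)) :=
    (hUc q.2 hq2).tendsto.comp
      (tendsto_nhdsWithin_of_tendsto_nhds_of_eventually_within _ hlim2
        (Filter.Eventually.of_forall fun n => hp2 (φ n)))
  have hUeq : U q.1 = U q.2 := by
    refine tendsto_nhds_unique ?_ hUlim2
    simpa only [hp5] using hUlim1
  have hqq : q.1 = q.2 := by
    apply hΦbij.injOn hs1 hs2
    rw [← hbd hs1, ← hbd hs2]; exact hUeq
  obtain ⟨G, hG, hinj⟩ := hloc q.1 hs1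
  have hev1 : ∀ᶠ n in atTop, (p (φ n)).1 ∈ G := hlim1.eventually_mem hG
  have hev2 : ∀ᶠ n in atTop, (p (φ n)).2 ∈ G := by
    rw [hqq] at hG
    exact hlim2.eventually_mem hG
  obtain ⟨n, hn1, hn2⟩ := (hev1.and hev2).exists
  exact hp6 (φ n) (hinj ⟨hn1, hp1 (φ n)⟩ ⟨hn2, hp2 (φ n)⟩ (hp5 (φ n)))
end
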